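/- arXiv:2604.19583 — 6 statements merged into one kernel-verified Lean document; each statement's English description precedes it below -/
import Mathlib

section
/- For any ξ, η ∈ ℝ and u, v ∈ 𝔻, sup_{z∈𝔻} |f_{ξ,u}(z) − f_{η,v}(z)| = sup_{θ∈ℝ} |1 − λ · (1 − r·e^{iθ})/(1 − r·e^{−iθ})|, where f_{ξ,u}(z) = e^{iξ}(z−u)/(1−ū·z), λ = e^{i(η−ξ)}·(1−ū·v)/(1−u·v̄), and r = ρ(u,v) = |(u−v)/(1−ū·v)|. -/
open Complex

noncomputable section

def unitDisk : Set ℂ := {z : ℂ | ‖z‖ < 1}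

noncomputable def autMap (ξ : ℝ) (u z : ℂ) : ℂ :=
  Complex.exp (Complex.I * ξ) * ((z - u) / (1 - (starRingEnd ℂ) u * z))

noncomputable def pseudoHyp (u v : ℂ) : ℝ :=
  ‖(u - v) / (1 - (starRingEnd ℂ) u * v)‖

lemma one_sub_ne {a b : ℂ} (h : ‖a‖ * ‖b‖ < 1) : 1 - a * b ≠ 0 := by
  intro h0
  have hab : a * b = 1 := by linear_combination -h0
  rw [← norm_mul, hab] at h
  simp at h

lemma mul_conj_one {z : ℂ} (hz : ‖z‖ = 1) : z * (starRingEnd ℂ) z = 1 := by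
  rw [Complex.mul_conj]
  norm_cast
  simp [Complex.normSq_eq_norm_sq, hz]

lemma abs_sub_eq {u z : ℂ} (hz : ‖z‖ = 1) :
    ‖z - u‖ = ‖1 - (starRingEnd ℂ) u * z‖ := by
  have h1 : z * (starRingEnd ℂ) z = 1 := mul_conj_one hz
  have h2 : 1 - u * (starRingEnd ℂ) z = (starRingEnd ℂ) z * (z - u) := by
    linear_combination -h1
  calc ‖z - u‖ = ‖(starRingEnd ℂ) z‖ * ‖z - u‖ := by
        simp [hz]
    _ = ‖(starRingEnd ℂ) z * (z - u)‖ := (norm_mul _ _).symm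
    _ = ‖1 - u * (starRingEnd ℂ) z‖ := by rw [← h2]
    _ = ‖(starRingEnd ℂ) (1 - u * (starRingEnd ℂ) z)‖ := (Complex.norm_conj _).symm
    _ = ‖1 - (starRingEnd ℂ) u * z‖ := by simp

set_option maxHeartbeats 1000000 in
/-- The core pointwise identity on the unit circle. -/
lemma core (ξ η : ℝ) (u v z : ℂ) (hu : ‖u‖ < 1) (hv : ‖v‖ < 1)
    (hz : ‖z‖ = 1) :
    ‖autMap ξ u z - autMap η v z‖
      = ‖1 - (Complex.exp (Complex.I * ((η : ℂ) - ξ))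
            * ((1 - (starRingEnd ℂ) u * v) / (1 - u * (starRingEnd ℂ) v)))
          * ((1 - (-((u - v) / (1 - (starRingEnd ℂ) u * v))
                    * ((1 - (starRingEnd ℂ) u * z) / (z - u))))
             / (1 - (starRingEnd ℂ) (-((u - v) / (1 - (starRingEnd ℂ) u * v))
                    * ((1 - (starRingEnd ℂ) u * z) / (z - u)))))‖ := by
  have hz0 : z ≠ 0 := by intro h; rw [h] at hz; simp at hz
  have hcz : (starRingEnd ℂ) z = z⁻¹ := by
    field_simp
    rw [mul_comm]; exact mul_conj_one hz
  have habsu : ‖(starRingEnd ℂ) u‖ = ‖u‖ := Complex.norm_conj u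
  have huz : 1 - (starRingEnd ℂ) u * z ≠ 0 := by
    apply one_sub_ne; rw [habsu, hz, mul_one]; exact hu
  have hvz : 1 - (starRingEnd ℂ) v * z ≠ 0 := by
    apply one_sub_ne; rw [Complex.norm_conj, hz, mul_one]; exact hv
  have huv : 1 - (starRingEnd ℂ) u * v ≠ 0 := by
    apply one_sub_ne; rw [habsu]
    nlinarith [norm_nonneg u, norm_nonneg v]
  have huv' : 1 - u * (starRingEnd ℂ) v ≠ 0 := by
    apply one_sub_ne; rw [Complex.norm_conj]
    nlinarith [norm_nonneg u, norm_nonneg v]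
  have huu : 1 - u * (starRingEnd ℂ) u ≠ 0 := by
    apply one_sub_ne; rw [Complex.norm_conj]
    nlinarith [norm_nonneg u]
  have hzu : z - u ≠ 0 := by
    intro h
    have h' : z = u := by linear_combination h
    rw [h'] at hz; rw [hz] at hu; exact lt_irrefl 1 hu
  have hzi : z⁻¹ ≠ 0 := inv_ne_zero hz0
  have e1 : (starRingEnd ℂ) z - (starRingEnd ℂ) u = (1 - (starRingEnd ℂ) u * z) * z⁻¹ := by
    rw [hcz]; field_simp
  have e2 : 1 - u * (starRingEnd ℂ) z = (z - u) * z⁻¹ := by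
    rw [hcz]; field_simp
  -- conj of W
  have hWconj : (starRingEnd ℂ) (-((u - v) / (1 - (starRingEnd ℂ) u * v))
        * ((1 - (starRingEnd ℂ) u * z) / (z - u)))
      = -(((starRingEnd ℂ) u - (starRingEnd ℂ) v) / (1 - u * (starRingEnd ℂ) v))
        * ((z - u) / (1 - (starRingEnd ℂ) u * z)) := by
    simp only [map_mul, map_neg, map_div₀, map_sub, map_one, Complex.conj_conj]
    rw [e1, e2, mul_div_mul_right _ _ hzi]
  have h1 : 1 - (-((u - v) / (1 - (starRingEnd ℂ) u * v))
        * ((1 - (starRingEnd ℂ) u * z) / (z - u)))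
      = (z - v) * (1 - u * (starRingEnd ℂ) u) / ((1 - (starRingEnd ℂ) u * v) * (z - u)) := by
    rw [neg_mul, div_mul_div_comm, sub_neg_eq_add, one_add_div (mul_ne_zero huv hzu)]; congr 1; ring
  have h2 : 1 - (starRingEnd ℂ) (-((u - v) / (1 - (starRingEnd ℂ) u * v))
        * ((1 - (starRingEnd ℂ) u * z) / (z - u)))
      = (1 - u * (starRingEnd ℂ) u) * (1 - (starRingEnd ℂ) v * z)
        / ((1 - u * (starRingEnd ℂ) v) * (1 - (starRingEnd ℂ) u * z)) := by
    rw [hWconj, neg_mul, div_mul_div_comm, sub_neg_eq_add, one_add_div (mul_ne_zero huv' huz)]; congr 1; ring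
  have h3 : (1 - (-((u - v) / (1 - (starRingEnd ℂ) u * v))
        * ((1 - (starRingEnd ℂ) u * z) / (z - u))))
      / (1 - (starRingEnd ℂ) (-((u - v) / (1 - (starRingEnd ℂ) u * v))
        * ((1 - (starRingEnd ℂ) u * z) / (z - u))))
      = ((1 - u * (starRingEnd ℂ) v) * ((z - v) * (1 - (starRingEnd ℂ) u * z)))
        / ((1 - (starRingEnd ℂ) u * v) * ((z - u) * (1 - (starRingEnd ℂ) v * z))) := by
    rw [h1, h2, div_div_eq_mul_div, div_mul_eq_mul_div, div_div]
    rw [div_eq_div_iff (by apply_rules [mul_ne_zero]) (by apply_rules [mul_ne_zero])]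
    ring
  have hexp : Complex.exp (Complex.I * (η : ℂ))
      = Complex.exp (Complex.I * (ξ : ℂ)) * Complex.exp (Complex.I * ((η : ℂ) - ξ)) := by
    rw [← Complex.exp_add]; ring_nf
  have hg : autMap ξ u z * ((Complex.exp (Complex.I * ((η : ℂ) - ξ))
        * ((1 - (starRingEnd ℂ) u * v) / (1 - u * (starRingEnd ℂ) v)))
      * ((1 - (-((u - v) / (1 - (starRingEnd ℂ) u * v))
            * ((1 - (starRingEnd ℂ) u * z) / (z - u))))
         / (1 - (starRingEnd ℂ) (-((u - v) / (1 - (starRingEnd ℂ) u * v))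
            * ((1 - (starRingEnd ℂ) u * z) / (z - u))))))
      = autMap η v z := by
    rw [h3, autMap, autMap, hexp]
    have hQ : ((1 - (starRingEnd ℂ) u * v) / (1 - u * (starRingEnd ℂ) v))
        * (((1 - u * (starRingEnd ℂ) v) * ((z - v) * (1 - (starRingEnd ℂ) u * z)))
          / ((1 - (starRingEnd ℂ) u * v) * ((z - u) * (1 - (starRingEnd ℂ) v * z))))
        = ((z - v) * (1 - (starRingEnd ℂ) u * z)) / ((z - u) * (1 - (starRingEnd ℂ) v * z)) := by
      rw [div_mul_div_comm, div_eq_div_iff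
        (mul_ne_zero huv' (mul_ne_zero huv (mul_ne_zero hzu hvz)))
        (mul_ne_zero hzu hvz)]
      ring
    have hR : ((z - u) / (1 - (starRingEnd ℂ) u * z))
        * (((z - v) * (1 - (starRingEnd ℂ) u * z)) / ((z - u) * (1 - (starRingEnd ℂ) v * z)))
        = (z - v) / (1 - (starRingEnd ℂ) v * z) := by
      rw [div_mul_div_comm, div_eq_div_iff
        (mul_ne_zero huz (mul_ne_zero hzu hvz)) hvz]
      ring
    calc Complex.exp (Complex.I * (ξ:ℂ)) * ((z - u) / (1 - (starRingEnd ℂ) u * z))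
          * (Complex.exp (Complex.I * ((η:ℂ) - ξ))
            * ((1 - (starRingEnd ℂ) u * v) / (1 - u * (starRingEnd ℂ) v))
            * (((1 - u * (starRingEnd ℂ) v) * ((z - v) * (1 - (starRingEnd ℂ) u * z)))
              / ((1 - (starRingEnd ℂ) u * v) * ((z - u) * (1 - (starRingEnd ℂ) v * z)))))
        = Complex.exp (Complex.I * (ξ:ℂ)) * Complex.exp (Complex.I * ((η:ℂ) - ξ))
          * (((z - u) / (1 - (starRingEnd ℂ) u * z))
            * (((1 - (starRingEnd ℂ) u * v) / (1 - u * (starRingEnd ℂ) v))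
              * (((1 - u * (starRingEnd ℂ) v) * ((z - v) * (1 - (starRingEnd ℂ) u * z)))
                / ((1 - (starRingEnd ℂ) u * v) * ((z - u) * (1 - (starRingEnd ℂ) v * z)))))) := by
          ring
      _ = Complex.exp (Complex.I * (ξ:ℂ)) * Complex.exp (Complex.I * ((η:ℂ) - ξ))
          * (((z - u) / (1 - (starRingEnd ℂ) u * z))
            * (((z - v) * (1 - (starRingEnd ℂ) u * z))
              / ((z - u) * (1 - (starRingEnd ℂ) v * z)))) := by rw [hQ]
      _ = Complex.exp (Complex.I * (ξ:ℂ)) * Complex.exp (Complex.I * ((η:ℂ) - ξ))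
          * ((z - v) / (1 - (starRingEnd ℂ) v * z)) := by rw [hR]
  have hmain : autMap ξ u z * (1 - (Complex.exp (Complex.I * ((η : ℂ) - ξ))
        * ((1 - (starRingEnd ℂ) u * v) / (1 - u * (starRingEnd ℂ) v)))
      * ((1 - (-((u - v) / (1 - (starRingEnd ℂ) u * v))
            * ((1 - (starRingEnd ℂ) u * z) / (z - u))))
         / (1 - (starRingEnd ℂ) (-((u - v) / (1 - (starRingEnd ℂ) u * v))
            * ((1 - (starRingEnd ℂ) u * z) / (z - u))))))
      = autMap ξ u z - autMap η v z := by
    rw [mul_sub, mul_one, ← hg]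
  have hfabs : ‖autMap ξ u z‖ = 1 := by
    rw [autMap, norm_mul, norm_div, ← abs_sub_eq hz]
    have he : ‖Complex.exp (Complex.I * (ξ:ℂ))‖ = 1 := by
      rw [mul_comm]; exact Complex.norm_exp_ofReal_mul_I ξ
    rw [he, one_mul]
    have hzu2 : ‖z - u‖ ≠ 0 := norm_ne_zero_iff.mpr hzu
    exact div_self hzu2
  rw [← hmain, norm_mul, hfabs, one_mul]

lemma exists_theta_of_abs (W : ℂ) (r : ℝ) (h : ‖W‖ = r) :
    ∃ θ : ℝ, W = (r : ℂ) * Complex.exp (Complex.I * θ) := by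
  refine ⟨Complex.arg W, ?_⟩
  rw [← h, mul_comm Complex.I]
  exact (Complex.norm_mul_exp_arg_mul_I W).symm

lemma abs_W_eq (u v z : ℂ) (hu : ‖u‖ < 1) (hz : ‖z‖ = 1) :
    ‖-((u - v) / (1 - (starRingEnd ℂ) u * v))
      * ((1 - (starRingEnd ℂ) u * z) / (z - u))‖ = pseudoHyp u v := by
  have hzu : z - u ≠ 0 := by
    intro h
    have h' : z = u := by linear_combination h
    rw [h'] at hz; rw [hz] at hu; exact lt_irrefl 1 hu
  have h2 : ‖1 - (starRingEnd ℂ) u * z‖ = ‖z - u‖ :=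
    (abs_sub_eq hz).symm
  have h3 : ‖(1 - (starRingEnd ℂ) u * z) / (z - u)‖ = 1 := by
    rw [norm_div, h2, div_self (norm_ne_zero_iff.mpr hzu)]
  rw [norm_mul, norm_neg, h3, mul_one, pseudoHyp]

lemma exists_z (u v : ℂ) (hu : ‖u‖ < 1) (hv : ‖v‖ < 1) (θ : ℝ) :
    ∃ z : ℂ, ‖z‖ = 1 ∧
      -((u - v) / (1 - (starRingEnd ℂ) u * v)) * ((1 - (starRingEnd ℂ) u * z) / (z - u))
        = ((pseudoHyp u v : ℝ) : ℂ) * Complex.exp (Complex.I * θ) := by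
  have huv : 1 - (starRingEnd ℂ) u * v ≠ 0 := by
    apply one_sub_ne; rw [Complex.norm_conj]
    nlinarith [norm_nonneg u, norm_nonneg v]
  have huu : 1 - u * (starRingEnd ℂ) u ≠ 0 := by
    apply one_sub_ne; rw [Complex.norm_conj]
    nlinarith [norm_nonneg u]
  by_cases hc : u - v = 0
  · refine ⟨1, by simp, ?_⟩
    have hr : pseudoHyp u v = 0 := by rw [pseudoHyp, hc, zero_div, norm_zero]
    rw [hc, hr, zero_div, neg_zero, zero_mul]
    norm_num
  · have hc0 : (u - v) / (1 - (starRingEnd ℂ) u * v) ≠ 0 := div_ne_zero hc huv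
    have hcbar : (starRingEnd ℂ) ((u - v) / (1 - (starRingEnd ℂ) u * v)) ≠ 0 := by
      intro h
      apply hc0
      have h2 := congrArg (starRingEnd ℂ) h
      simpa using h2
    have hrabs : pseudoHyp u v = ‖(u - v) / (1 - (starRingEnd ℂ) u * v)‖ := rfl
    have hr0 : ((pseudoHyp u v : ℝ) : ℂ) ≠ 0 := by
      simp only [ne_eq, Complex.ofReal_eq_zero, hrabs]
      exact norm_ne_zero_iff.mpr hc0
    set c : ℂ := (u - v) / (1 - (starRingEnd ℂ) u * v) with hcdef
    set w : ℂ := -((pseudoHyp u v : ℝ) : ℂ) * Complex.exp (-(Complex.I * θ)) / (starRingEnd ℂ) c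
      with hwdef
    have habsexp : ‖Complex.exp (-(Complex.I * θ))‖ = 1 := by
      have : -(Complex.I * (θ:ℂ)) = ((-θ : ℝ) : ℂ) * Complex.I := by push_cast; ring
      rw [this]; exact Complex.norm_exp_ofReal_mul_I _
    have hw1 : ‖w‖ = 1 := by
      rw [hwdef, norm_div, norm_mul, norm_neg, habsexp, mul_one, Complex.norm_conj,
        Complex.norm_real, Real.norm_eq_abs, hrabs, _root_.abs_of_nonneg (norm_nonneg c),
        div_self (norm_ne_zero_iff.mpr hc0)]
    have hw0 : w ≠ 0 := by
      intro h; rw [h] at hw1; simp at hw1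
    have hden : 1 + (starRingEnd ℂ) u * w ≠ 0 := by
      have h1 : 1 - -((starRingEnd ℂ) u) * w ≠ 0 := by
        apply one_sub_ne
        rw [norm_neg, Complex.norm_conj, hw1, mul_one]; exact hu
      intro h; apply h1; linear_combination h
    refine ⟨(w + u) / (1 + (starRingEnd ℂ) u * w), ?_, ?_⟩
    · rw [norm_div]
      have : ‖w + u‖ = ‖1 + (starRingEnd ℂ) u * w‖ := by
        have := abs_sub_eq (u := -u) hw1
        simpa using this
      rw [this, div_self (norm_ne_zero_iff.mpr hden)]
    · have e1 : 1 - (starRingEnd ℂ) u * ((w + u) / (1 + (starRingEnd ℂ) u * w))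
          = (1 - u * (starRingEnd ℂ) u) / (1 + (starRingEnd ℂ) u * w) := by
        field_simp; ring
      have e2 : (w + u) / (1 + (starRingEnd ℂ) u * w) - u
          = w * (1 - u * (starRingEnd ℂ) u) / (1 + (starRingEnd ℂ) u * w) := by
        rw [eq_div_iff hden, sub_mul, div_mul_cancel₀ _ hden]; ring
      rw [e1, e2]
      have e3 : (1 - u * (starRingEnd ℂ) u) / (1 + (starRingEnd ℂ) u * w)
          / (w * (1 - u * (starRingEnd ℂ) u) / (1 + (starRingEnd ℂ) u * w)) = w⁻¹ := by
        rw [div_div_div_comm, div_self hden, div_one, mul_comm w, ← div_div, div_self huu,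
          one_div]
      rw [e3]
      have hcc : c * (starRingEnd ℂ) c = (((pseudoHyp u v : ℝ) : ℂ))^2 := by
        rw [Complex.mul_conj, hrabs]
        norm_cast
        rw [Complex.sq_norm]
      have hee : Complex.exp (Complex.I * θ) * Complex.exp (-(Complex.I * θ)) = 1 := by
        rw [← Complex.exp_add]; simp
      have hkey : w * (((pseudoHyp u v : ℝ) : ℂ) * Complex.exp (Complex.I * θ)) = -c := by
        rw [hwdef, div_mul_eq_mul_div, div_eq_iff hcbar]
        linear_combination (-(((pseudoHyp u v : ℝ) : ℂ))^2) * hee + hcc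
      rw [← hkey]
      rw [mul_comm w, mul_assoc, mul_inv_cancel₀ hw0, mul_one]

lemma autMap_abs_le (ξ : ℝ) (u z : ℂ) (hu : ‖u‖ < 1) (hz : ‖z‖ ≤ 1) :
    ‖autMap ξ u z‖ ≤ 2 / (1 - ‖u‖) := by
  rw [autMap, norm_mul, norm_div]
  have he : ‖Complex.exp (Complex.I * ξ)‖ = 1 := by
    rw [mul_comm]; exact Complex.norm_exp_ofReal_mul_I ξ
  rw [he, one_mul]
  have h1 : ‖z - u‖ ≤ 2 := by
    calc ‖z - u‖ ≤ ‖z‖ + ‖u‖ := by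
          simpa using norm_sub_le z u
      _ ≤ 2 := by linarith
  have h2 : 1 - ‖u‖ ≤ ‖1 - (starRingEnd ℂ) u * z‖ := by
    have h3 := norm_sub_norm_le (1 : ℂ) ((starRingEnd ℂ) u * z)
    simp only [norm_one, norm_mul, Complex.norm_conj] at h3
    nlinarith [norm_nonneg u, norm_nonneg z,
      norm_nonneg (1 - (starRingEnd ℂ) u * z)]
  have hpos : 0 < 1 - ‖u‖ := by linarith
  exact div_le_div₀ (by norm_num) h1 hpos h2

lemma conj_r_exp (r θ : ℝ) :
    (starRingEnd ℂ) ((r : ℂ) * Complex.exp (Complex.I * θ))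
      = (r : ℂ) * Complex.exp (-(Complex.I * θ)) := by
  rw [map_mul, Complex.conj_ofReal, ← Complex.exp_conj]
  congr 2
  simp [Complex.conj_I]

theorem sup_dist_eq_sup_over_circle
    (ξ η : ℝ) (u v : ℂ) (hu : u ∈ unitDisk) (hv : v ∈ unitDisk) :
    (⨆ z : unitDisk, ‖autMap ξ u z - autMap η v z‖)
      = ⨆ θ : ℝ, ‖
          (1 - (Complex.exp (Complex.I * (η - ξ))
                  * ((1 - (starRingEnd ℂ) u * v) / (1 - u * (starRingEnd ℂ) v)))
              * ((1 - (pseudoHyp u v : ℂ) * Complex.exp (Complex.I * θ))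
                  / (1 - (pseudoHyp u v : ℂ) * Complex.exp (-(Complex.I * θ)))))‖ := by
  have hu' : ‖u‖ < 1 := hu
  have hv' : ‖v‖ < 1 := hv
  haveI : Nonempty unitDisk := ⟨⟨0, by simp [unitDisk]⟩⟩
  set g : ℝ → ℝ := fun θ => ‖1 - (Complex.exp (Complex.I * (η - ξ))
                  * ((1 - (starRingEnd ℂ) u * v) / (1 - u * (starRingEnd ℂ) v)))
              * ((1 - (pseudoHyp u v : ℂ) * Complex.exp (Complex.I * θ))
                  / (1 - (pseudoHyp u v : ℂ) * Complex.exp (-(Complex.I * θ))))‖ with hgdef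
  -- every g-value is realized on the circle
  have keyA : ∀ θ : ℝ, ∃ z : ℂ, ‖z‖ = 1 ∧
      ‖autMap ξ u z - autMap η v z‖ = g θ := by
    intro θ
    obtain ⟨z, hz1, hzW⟩ := exists_z u v hu' hv' θ
    refine ⟨z, hz1, ?_⟩
    rw [core ξ η u v z hu' hv' hz1, hzW, conj_r_exp]
  -- every circle value is a g-value
  have keyB : ∀ z : ℂ, ‖z‖ = 1 →
      ∃ θ : ℝ, ‖autMap ξ u z - autMap η v z‖ = g θ := by
    intro z hz1
    obtain ⟨θ, hθ⟩ := exists_theta_of_abs _ _ (abs_W_eq u v z hu' hz1)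
    exact ⟨θ, by rw [core ξ η u v z hu' hv' hz1, hθ, conj_r_exp]⟩
  -- uniform bound
  have hbnd : ∀ z : ℂ, ‖z‖ ≤ 1 →
      ‖autMap ξ u z - autMap η v z‖
        ≤ 2 / (1 - ‖u‖) + 2 / (1 - ‖v‖) := by
    intro z hz
    calc ‖autMap ξ u z - autMap η v z‖
        ≤ ‖autMap ξ u z‖ + ‖autMap η v z‖ := by
          simpa using norm_sub_le (autMap ξ u z) (autMap η v z)
      _ ≤ 2 / (1 - ‖u‖) + 2 / (1 - ‖v‖) :=
          add_le_add (autMap_abs_le ξ u z hu' hz) (autMap_abs_le η v z hv' hz)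
  have bddg : BddAbove (Set.range g) := by
    refine ⟨2 / (1 - ‖u‖) + 2 / (1 - ‖v‖), ?_⟩
    rintro x ⟨θ, rfl⟩
    obtain ⟨z, hz1, hze⟩ := keyA θ
    rw [← hze]
    exact hbnd z hz1.le
  have bddh : BddAbove (Set.range fun z : unitDisk =>
      ‖autMap ξ u z - autMap η v z‖) := by
    refine ⟨2 / (1 - ‖u‖) + 2 / (1 - ‖v‖), ?_⟩
    rintro x ⟨z, rfl⟩
    exact hbnd z z.2.le
  -- differentiability on the closed disk
  have hden : ∀ (a : ℂ), ‖a‖ < 1 → ∀ w : ℂ, w ∈ Metric.closedBall (0:ℂ) 1 →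
      1 - (starRingEnd ℂ) a * w ≠ 0 := by
    intro a ha w hw
    rw [Metric.mem_closedBall, Complex.dist_eq, sub_zero] at hw
    apply one_sub_ne
    rw [Complex.norm_conj]
    nlinarith [norm_nonneg a, norm_nonneg w]
  have hdcl : DiffContOnCl ℂ (fun z : ℂ => autMap ξ u z - autMap η v z)
      (Metric.ball (0:ℂ) 1) := by
    apply DifferentiableOn.diffContOnCl
    rw [closure_ball (0:ℂ) one_ne_zero]
    apply DifferentiableOn.sub <;>
      · unfold autMap
        apply DifferentiableOn.const_mul
        apply DifferentiableOn.div
        · exact differentiableOn_id.sub (differentiableOn_const _)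
        · exact (differentiableOn_const _).sub ((differentiableOn_const _).mul differentiableOn_id)
        · first
          | exact hden u hu'
          | exact hden v hv'
  apply le_antisymm
  · apply ciSup_le
    rintro ⟨z, hzD⟩
    have hzball : z ∈ closure (Metric.ball (0:ℂ) 1) := by
      apply subset_closure
      rw [Metric.mem_ball, Complex.dist_eq, sub_zero]
      exact hzD
    have := Complex.norm_le_of_forall_mem_frontier_norm_le Metric.isBounded_ball hdcl
      (C := ⨆ θ : ℝ, g θ) ?_ hzball
    · simpa using this
    · intro w hw
      rw [frontier_ball (0:ℂ) one_ne_zero, Metric.mem_sphere, Complex.dist_eq, sub_zero] at hw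
      obtain ⟨θ, hθ⟩ := keyB w hw
      rw [hθ]
      exact le_ciSup bddg θ
  · apply ciSup_le
    intro θ
    obtain ⟨z, hz1, hze⟩ := keyA θ
    rw [← hze]
    -- approximate the boundary point from inside
    have huz : 1 - (starRingEnd ℂ) u * z ≠ 0 := by
      apply one_sub_ne; rw [Complex.norm_conj, hz1, mul_one]; exact hu'
    have hvz : 1 - (starRingEnd ℂ) v * z ≠ 0 := by
      apply one_sub_ne; rw [Complex.norm_conj, hz1, mul_one]; exact hv'
    have hcont : ContinuousAt (fun w : ℂ => autMap ξ u w - autMap η v w) z := by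
      apply ContinuousAt.sub <;>
        · unfold autMap
          apply ContinuousAt.mul continuousAt_const
          apply ContinuousAt.div
          · exact continuousAt_id.sub continuousAt_const
          · exact continuousAt_const.sub (continuousAt_const.mul continuousAt_id)
          · first | exact huz | exact hvz
    have h1 : Filter.Tendsto (fun t : ℝ => (t : ℂ) * z)
        (nhdsWithin 1 (Set.Iio 1)) (nhds z) := by
      have h2 : Filter.Tendsto (fun t : ℝ => (t : ℂ) * z) (nhds 1) (nhds (((1:ℝ):ℂ) * z)) :=
        ((Complex.continuous_ofReal.mul continuous_const).tendsto 1)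
      simp only [Complex.ofReal_one, one_mul] at h2
      exact h2.mono_left nhdsWithin_le_nhds
    have htend : Filter.Tendsto
        (fun t : ℝ => ‖autMap ξ u ((t:ℂ)*z) - autMap η v ((t:ℂ)*z)‖)
        (nhdsWithin 1 (Set.Iio 1))
        (nhds (‖autMap ξ u z - autMap η v z‖)) :=
      ((continuous_norm.continuousAt.comp hcont).tendsto).comp h1
    apply le_of_tendsto htend
    filter_upwards [Ioo_mem_nhdsLT_of_mem (by norm_num : (1:ℝ) ∈ Set.Ioc 0 1)] with t ht
    have htD : (t:ℂ)*z ∈ unitDisk := by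
      have : ‖(t:ℂ)*z‖ = |t| := by
        rw [norm_mul, Complex.norm_real, Real.norm_eq_abs, hz1, mul_one]
      simp only [unitDisk, Set.mem_setOf_eq, this]
      rw [abs_of_pos ht.1]
      exact ht.2
    exact le_ciSup bddh ⟨(t:ℂ)*z, htD⟩
end
end

section
/- Let 0 ≤ r < 1. Then the set of values of arg((1 − r·e^{iθ})/(1 − r·e^{−iθ})) as θ ranges over ℝ is exactly the closed interval [−δ, δ], where δ ∈ [0, π/2] satisfies sin δ = 2r√(1−r²) and cos δ = 1 − 2r². -/
open Complex Real
noncomputable section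

namespace ArgRangeAux

lemma neg_Imul (θ : ℝ) : -(Complex.I * θ) = ((-θ : ℝ) : ℂ) * Complex.I := by push_cast; ring

lemma Imul (θ : ℝ) : Complex.I * θ = ((θ : ℝ) : ℂ) * Complex.I := by ring

lemma num_re (r θ : ℝ) : ((1:ℂ) - (r:ℂ) * Complex.exp (Complex.I * θ)).re = 1 - r * Real.cos θ := by
  rw [Imul]
  simp [Complex.sub_re, Complex.mul_re, Complex.exp_ofReal_mul_I_re, Complex.exp_ofReal_mul_I_im]

lemma num_im (r θ : ℝ) : ((1:ℂ) - (r:ℂ) * Complex.exp (Complex.I * θ)).im = -(r * Real.sin θ) := by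
  rw [Imul]
  simp [Complex.sub_im, Complex.mul_im, Complex.exp_ofReal_mul_I_re, Complex.exp_ofReal_mul_I_im]

lemma den_re (r θ : ℝ) : ((1:ℂ) - (r:ℂ) * Complex.exp (-(Complex.I * θ))).re = 1 - r * Real.cos θ := by
  rw [neg_Imul]
  simp [Complex.sub_re, Complex.mul_re, Complex.exp_ofReal_mul_I_re, Complex.exp_ofReal_mul_I_im,
    -Complex.ofReal_neg]

lemma den_im (r θ : ℝ) : ((1:ℂ) - (r:ℂ) * Complex.exp (-(Complex.I * θ))).im = r * Real.sin θ := by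
  rw [neg_Imul]
  simp [Complex.sub_im, Complex.mul_im, Complex.exp_ofReal_mul_I_re, Complex.exp_ofReal_mul_I_im,
    -Complex.ofReal_neg]

lemma den_ne (r : ℝ) (hr0 : 0 ≤ r) (hr1 : r < 1) (θ : ℝ) :
    ((1:ℂ) - (r:ℂ) * Complex.exp (-(Complex.I * θ))) ≠ 0 := by
  intro h
  rw [sub_eq_zero] at h
  have := congrArg (‖·‖) h
  rw [norm_one, norm_mul, Complex.norm_real, Real.norm_eq_abs, neg_Imul, Complex.norm_exp_ofReal_mul_I,
    _root_.abs_of_nonneg hr0, mul_one] at this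
  linarith

lemma num_ne (r : ℝ) (hr0 : 0 ≤ r) (hr1 : r < 1) (θ : ℝ) :
    ((1:ℂ) - (r:ℂ) * Complex.exp (Complex.I * θ)) ≠ 0 := by
  intro h
  rw [sub_eq_zero] at h
  have := congrArg (‖·‖) h
  rw [norm_one, norm_mul, Complex.norm_real, Real.norm_eq_abs, Imul, Complex.norm_exp_ofReal_mul_I,
    _root_.abs_of_nonneg hr0, mul_one] at this
  linarith

lemma abs_w (r : ℝ) (hr0 : 0 ≤ r) (hr1 : r < 1) (θ : ℝ) :
    ‖(((1:ℂ) - (r:ℂ) * Complex.exp (Complex.I * θ))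
      / ((1:ℂ) - (r:ℂ) * Complex.exp (-(Complex.I * θ))))‖ = 1 := by
  rw [norm_div]
  have h1 : ‖((1:ℂ) - (r:ℂ) * Complex.exp (Complex.I * θ))‖
      = ‖((1:ℂ) - (r:ℂ) * Complex.exp (-(Complex.I * θ)))‖ := by
    rw [← Complex.norm_conj ((1:ℂ) - (r:ℂ) * Complex.exp (Complex.I * θ))]
    congr 1
    rw [map_sub, map_one, map_mul, Complex.conj_ofReal, ← Complex.exp_conj]
    congr 2
    simp [Complex.conj_I]
  rw [h1, div_self (norm_ne_zero_iff.mpr (den_ne r hr0 hr1 θ))]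

lemma re_ge (r : ℝ) (hr0 : 0 ≤ r) (hr1 : r < 1) (θ : ℝ) :
    1 - 2 * r ^ 2 ≤ (((1:ℂ) - (r:ℂ) * Complex.exp (Complex.I * θ))
      / ((1:ℂ) - (r:ℂ) * Complex.exp (-(Complex.I * θ)))).re := by
  rw [Complex.div_re, Complex.normSq_apply, num_re, num_im, den_re, den_im]
  have hc := Real.cos_le_one θ
  have hc' := Real.neg_one_le_cos θ
  have hpyth := Real.sin_sq_add_cos_sq θ
  have ha : 0 < 1 - r * Real.cos θ := by nlinarith
  have hN : 0 < (1 - r * Real.cos θ) * (1 - r * Real.cos θ) + r * Real.sin θ * (r * Real.sin θ) := by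
    nlinarith
  rw [← add_div, le_div_iff₀ hN]
  set c := Real.cos θ
  set s := Real.sin θ
  have key : (1 - r*c)*(1 - r*c) + -(r*s)*(r*s) - (1-2*r^2)*((1-r*c)*(1-r*c) + r*s*(r*s))
      = 2*r^2*(c-r)^2 - 2*r^2*(1-r^2)*(s^2+c^2-1) := by ring
  have h0 : s^2 + c^2 - 1 = 0 := by linarith [hpyth]
  rw [h0, mul_zero, sub_zero] at key
  nlinarith [mul_nonneg (sq_nonneg r) (sq_nonneg (c - r))]

end ArgRangeAux

open ArgRangeAux in
theorem arg_range_eq_Icc (r δ : ℝ) (hr0 : 0 ≤ r) (hr1 : r < 1)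
    (hδ : δ ∈ Set.Icc 0 (Real.pi / 2))
    (hsin : Real.sin δ = 2 * r * Real.sqrt (1 - r ^ 2))
    (hcos : Real.cos δ = 1 - 2 * r ^ 2) :
    (Set.range fun θ : ℝ => Complex.arg
        ((1 - (r : ℂ) * Complex.exp (Complex.I * θ))
          / (1 - (r : ℂ) * Complex.exp (-(Complex.I * θ)))))
      = Set.Icc (-δ) δ := by
  obtain ⟨hδ0, hδπ⟩ := hδ
  have hπ := Real.pi_pos
  set w : ℝ → ℂ := fun θ => (1 - (r : ℂ) * Complex.exp (Complex.I * θ))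
      / (1 - (r : ℂ) * Complex.exp (-(Complex.I * θ))) with hw
  show Set.range (fun θ : ℝ => Complex.arg (w θ)) = Set.Icc (-δ) δ
  have hwne : ∀ θ, w θ ≠ 0 := fun θ => div_ne_zero (num_ne r hr0 hr1 θ) (den_ne r hr0 hr1 θ)
  have habs : ∀ θ, ‖w θ‖ = 1 := abs_w r hr0 hr1
  have hre : ∀ θ, Real.cos δ ≤ (w θ).re := fun θ => hcos ▸ re_ge r hr0 hr1 θ
  have hcosarg : ∀ θ, Real.cos (Complex.arg (w θ)) = (w θ).re := by
    intro θ
    rw [Complex.cos_arg (hwne θ), habs θ, div_one]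
  have harg : ∀ θ, Complex.arg (w θ) ∈ Set.Icc (-δ) δ := by
    intro θ
    have habsle : |Complex.arg (w θ)| ≤ δ := by
      by_contra h
      push_neg at h
      have h1 : Real.cos |Complex.arg (w θ)| < Real.cos δ :=
        Real.strictAntiOn_cos ⟨hδ0, by linarith⟩
          ⟨abs_nonneg _, Complex.abs_arg_le_pi _⟩ h
      rw [Real.cos_abs] at h1
      linarith [hre θ, hcosarg θ]
    exact Set.mem_Icc.mpr (abs_le.mp habsle)
  have hslit : ∀ θ, w θ ∈ Complex.slitPlane := by
    intro θ
    rw [Complex.mem_slitPlane_iff]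
    by_contra h
    push_neg at h
    obtain ⟨h1, h2⟩ := h
    have hsq : (w θ).re * (w θ).re + (w θ).im * (w θ).im = 1 := by
      have := Complex.sq_norm (w θ)
      rw [habs θ, Complex.normSq_apply] at this
      linarith [this]
    rw [h2] at hsq
    have h3 := hre θ
    rw [hcos] at h3
    nlinarith [mul_pos (by linarith : (0:ℝ) < 1 - r) (by linarith : (0:ℝ) < 1 + r)]
  have hwc : Continuous w := by
    apply Continuous.div
    · exact continuous_const.sub (continuous_const.mul
        (Complex.continuous_exp.comp (continuous_const.mul Complex.continuous_ofReal)))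
    · exact continuous_const.sub (continuous_const.mul
        (Complex.continuous_exp.comp (continuous_const.mul Complex.continuous_ofReal).neg))
    · exact fun θ => den_ne r hr0 hr1 θ
  have hcont : Continuous fun θ : ℝ => Complex.arg (w θ) := by
    rw [continuous_iff_continuousAt]
    intro θ
    exact (Complex.continuousAt_arg (hslit θ)).comp hwc.continuousAt
  -- endpoint values
  set θ₀ := Real.arccos r with hθ₀
  have hc0 : Real.cos θ₀ = r := Real.cos_arccos (by linarith) (by linarith)
  have hs0' : Real.sin θ₀ = Real.sqrt (1 - r ^ 2) := Real.sin_arccos r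
  set s := Real.sqrt (1 - r ^ 2) with hsdef
  have hs2 : s ^ 2 = 1 - r ^ 2 := Real.sq_sqrt (by nlinarith)
  have hval1 : w θ₀ = ↑(Real.cos (-δ)) + ↑(Real.sin (-δ)) * Complex.I := by
    rw [hw]
    simp only
    rw [div_eq_iff (den_ne r hr0 hr1 θ₀)]
    apply Complex.ext
    · simp only [num_re, Complex.mul_re, Complex.add_re, Complex.add_im, Complex.mul_im,
        Complex.ofReal_re, Complex.ofReal_im, Complex.I_re, Complex.I_im, den_re, den_im,
        Real.cos_neg, Real.sin_neg, hcos, hsin, hc0, hs0']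
      linear_combination (-2*r^2) * hs2
    · simp only [num_im, Complex.mul_im, Complex.add_re, Complex.add_im, Complex.mul_re,
        Complex.ofReal_re, Complex.ofReal_im, Complex.I_re, Complex.I_im, den_re, den_im,
        Real.cos_neg, Real.sin_neg, hcos, hsin, hc0, hs0']
      ring
  have hval2 : w (-θ₀) = ↑(Real.cos δ) + ↑(Real.sin δ) * Complex.I := by
    rw [hw]
    simp only
    rw [div_eq_iff (den_ne r hr0 hr1 (-θ₀))]
    apply Complex.ext
    · simp only [num_re, Complex.mul_re, Complex.add_re, Complex.add_im, Complex.mul_im,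
        Complex.ofReal_re, Complex.ofReal_im, Complex.I_re, Complex.I_im, den_re, den_im,
        Real.cos_neg, Real.sin_neg, hcos, hsin, hc0, hs0']
      linear_combination (-2*r^2) * hs2
    · simp only [num_im, Complex.mul_im, Complex.add_re, Complex.add_im, Complex.mul_re,
        Complex.ofReal_re, Complex.ofReal_im, Complex.I_re, Complex.I_im, den_re, den_im,
        Real.cos_neg, Real.sin_neg, hcos, hsin, hc0, hs0']
      ring
  have harg1 : Complex.arg (w θ₀) = -δ := by
    rw [hval1, Complex.ofReal_cos, Complex.ofReal_sin]
    exact Complex.arg_cos_add_sin_mul_I ⟨by linarith, by linarith⟩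
  have harg2 : Complex.arg (w (-θ₀)) = δ := by
    rw [hval2, Complex.ofReal_cos, Complex.ofReal_sin]
    exact Complex.arg_cos_add_sin_mul_I ⟨by linarith, by linarith⟩
  refine Set.Subset.antisymm ?_ ?_
  · rintro x ⟨θ, rfl⟩
    exact harg θ
  · have hIVT := intermediate_value_uIcc (a := θ₀) (b := -θ₀)
      (f := fun θ : ℝ => Complex.arg (w θ)) hcont.continuousOn
    simp only [harg1, harg2] at hIVT
    rw [Set.uIcc_of_le (by linarith : -δ ≤ δ)] at hIVT
    intro x hx
    obtain ⟨θ, _, hθ⟩ := hIVT hx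
    exact ⟨θ, hθ⟩
end
end

section
/- Let 0 ≤ r < 1 and let λ ∈ ℂ with |λ| = 1. If |λ + 1| ≤ 2r, then sup_{θ∈ℝ} |1 − λ·(1 − r·e^{iθ})/(1 − r·e^{−iθ})| = 2. -/
open Complex

noncomputable section

theorem sup_eq_two_of_close (r : ℝ) (hr0 : 0 ≤ r) (hr1 : r < 1)
    (l : ℂ) (hl : ‖l‖ = 1) (hcond : ‖l + 1‖ ≤ 2 * r) :
    (⨆ θ : ℝ, ‖
        (1 - l * ((1 - (r : ℂ) * Complex.exp (Complex.I * θ))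
            / (1 - (r : ℂ) * Complex.exp (-(Complex.I * θ)))))‖) = 2 := by
  set f : ℝ → ℝ := fun θ => ‖
        (1 - l * ((1 - (r : ℂ) * Complex.exp (Complex.I * θ))
            / (1 - (r : ℂ) * Complex.exp (-(Complex.I * θ)))))‖ with hf
  -- denominator is nonzero
  have habs_exp : ∀ θ : ℝ, ‖Complex.exp (-(Complex.I * θ))‖ = 1 := by
    intro θ
    rw [Complex.norm_exp]
    simp
  have hden : ∀ θ : ℝ, (1 - (r : ℂ) * Complex.exp (-(Complex.I * θ))) ≠ 0 := by
    intro θ h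
    have h1 : (r : ℂ) * Complex.exp (-(Complex.I * θ)) = 1 := by
      have := sub_eq_zero.mp h
      linear_combination -this
    have h2 : ‖(r : ℂ) * Complex.exp (-(Complex.I * θ))‖ = ‖(1 : ℂ)‖ := by rw [h1]
    rw [norm_mul, habs_exp θ, Complex.norm_real, Real.norm_eq_abs, _root_.abs_of_nonneg hr0] at h2
    simp at h2
    linarith
  -- numerator is the conjugate of the denominator
  have hconj : ∀ θ : ℝ, (1 - (r : ℂ) * Complex.exp (Complex.I * θ))
      = starRingEnd ℂ (1 - (r : ℂ) * Complex.exp (-(Complex.I * θ))) := by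
    intro θ
    rw [map_sub, map_mul, ← Complex.exp_conj]
    simp
  have hbound : ∀ θ : ℝ, f θ ≤ 2 := by
    intro θ
    have h1 : ‖(1 - (r : ℂ) * Complex.exp (Complex.I * θ))
        / (1 - (r : ℂ) * Complex.exp (-(Complex.I * θ)))‖ = 1 := by
      rw [norm_div, hconj θ, Complex.norm_conj, div_self]
      exact fun h => hden θ (by simpa using (norm_eq_zero.mp h))
    have h2 : ‖l * ((1 - (r : ℂ) * Complex.exp (Complex.I * θ))
        / (1 - (r : ℂ) * Complex.exp (-(Complex.I * θ))))‖ = 1 := by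
      rw [norm_mul, hl, h1, one_mul]
    calc f θ ≤ ‖(1 : ℂ)‖ + ‖l * ((1 - (r : ℂ) * Complex.exp (Complex.I * θ))
        / (1 - (r : ℂ) * Complex.exp (-(Complex.I * θ))))‖ := norm_sub_le _ _
      _ = 2 := by rw [norm_one, h2]; norm_num
  -- find θ₀ with value 2
  obtain ⟨θ₀, hθ₀⟩ : ∃ θ : ℝ, l * ((1 - (r : ℂ) * Complex.exp (Complex.I * θ))
      / (1 - (r : ℂ) * Complex.exp (-(Complex.I * θ)))) = -1 := by
    rcases eq_or_lt_of_le hr0 with hr | hr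
    · -- r = 0 : then l = -1
      have hl1 : l = -1 := by
        have h0 : ‖l + 1‖ = 0 := le_antisymm (by simpa [← hr] using hcond)
          (norm_nonneg _)
        have := norm_eq_zero.mp h0
        linear_combination this
      refine ⟨0, ?_⟩
      rw [hl1, ← hr]
      norm_num
    · -- r > 0
      set α := Complex.arg l with hα
      set β := α / 2 with hβ
      have hlexp : l = Complex.exp ((α : ℂ) * Complex.I) := by
        conv_lhs => rw [← Complex.norm_mul_exp_arg_mul_I l]
        rw [hl]; simp; rfl
      have haa : Complex.exp ((β : ℂ) * Complex.I) * Complex.exp (-((β : ℂ) * Complex.I)) = 1 := by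
        rw [← Complex.exp_add]; simp
      have hαβ : (α : ℂ) * Complex.I = (β : ℂ) * Complex.I + (β : ℂ) * Complex.I := by
        push_cast [hβ]; ring
      -- |l + 1| = 2 |cos β|
      have hfactor : l + 1 = Complex.exp ((β : ℂ) * Complex.I) * (2 * Complex.cos β) := by
        rw [hlexp, Complex.cos, hαβ, Complex.exp_add]
        simp only [neg_mul]
        linear_combination -haa
      have habsβ : ‖Complex.exp ((β : ℂ) * Complex.I)‖ = 1 := by
        rw [Complex.norm_exp]; simp
      have hcosb : 2 * |Real.cos β| ≤ 2 * r := by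
        calc 2 * |Real.cos β| = ‖l + 1‖ := by
              rw [hfactor, norm_mul, habsβ, one_mul, ← Complex.ofReal_cos,
                show ((2 : ℂ) * ((Real.cos β : ℝ) : ℂ)) = (((2 * Real.cos β : ℝ)) : ℂ) by
                  push_cast; ring, Complex.norm_real, Real.norm_eq_abs, abs_mul]
              norm_num
          _ ≤ 2 * r := hcond
      -- choose θ₀
      set x := Real.cos β / r with hx
      have hx1 : |x| ≤ 1 := by
        rw [hx, abs_div, _root_.abs_of_pos hr, div_le_one hr]
        linarith
      set θ₀ := Real.arccos x - β with hθ₀def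
      have hc : r * Real.cos (θ₀ + β) = Real.cos β := by
        rw [hθ₀def, sub_add_cancel, Real.cos_arccos (by linarith [abs_le.mp hx1 |>.1])
          (by linarith [abs_le.mp hx1 |>.2]), hx]
        field_simp
      refine ⟨θ₀, ?_⟩
      -- key identity
      set a := Complex.exp ((β : ℂ) * Complex.I) with ha
      set b := Complex.exp ((↑(θ₀ + β) : ℂ) * Complex.I) with hb
      have hrc : (r : ℂ) * (b + Complex.exp (-((↑(θ₀ + β) : ℂ) * Complex.I)))
          = a + Complex.exp (-((β : ℂ) * Complex.I)) := by
        have h := congrArg (fun t : ℝ => (t : ℂ)) hc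
        simp only [Complex.ofReal_mul, Complex.ofReal_cos] at h
        rw [Complex.cos, Complex.cos] at h
        simp only [neg_mul] at h
        rw [ha, hb]
        linear_combination 2 * h
      have he1 : Complex.exp (Complex.I * (θ₀ : ℂ))
          = b * Complex.exp (-((β : ℂ) * Complex.I)) := by
        rw [hb, ← Complex.exp_add]
        congr 1
        push_cast
        ring
      have he2 : Complex.exp (-(Complex.I * (θ₀ : ℂ)))
          = Complex.exp (-((↑(θ₀ + β) : ℂ) * Complex.I)) * a := by
        rw [ha, ← Complex.exp_add]
        congr 1
        push_cast
        ring
      have hla : l = a * a := by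
        rw [hlexp, hαβ, Complex.exp_add, ha]
      have key : l * (1 - (r : ℂ) * Complex.exp (Complex.I * (θ₀ : ℂ)))
          = -(1 - (r : ℂ) * Complex.exp (-(Complex.I * (θ₀ : ℂ)))) := by
        rw [hla, he1, he2]
        linear_combination (-(a : ℂ)) * hrc - (1 + (r : ℂ) * a * b) * haa
      rw [← mul_div_assoc, key, neg_div, div_self (hden θ₀)]
  have hf2 : f θ₀ = 2 := by
    simp only [hf, hθ₀]
    rw [show (1 : ℂ) - -1 = 2 by ring]
    simp
  refine le_antisymm (ciSup_le hbound) ?_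
  calc (2 : ℝ) = f θ₀ := hf2.symm
    _ ≤ ⨆ θ, f θ := le_ciSup ⟨2, by rintro y ⟨θ, rfl⟩; exact hbound θ⟩ θ₀
end
end

section
/- For any ξ, η ∈ ℝ and u, v ∈ 𝔻, if |λ + 1| ≤ 2ρ(u,v), where λ = e^{i(η−ξ)}·(1−ū·v)/(1−u·v̄), then sup_{z∈𝔻} |f_{ξ,u}(z) − f_{η,v}(z)| = 2. -/
open Complex

noncomputable section

lemma sq_abs_le' (u : ℂ) (hu : ‖u‖ ≤ 1) : u.re^2 + u.im^2 ≤ 1 := by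
  have h := Complex.sq_norm u
  rw [Complex.normSq_apply] at h
  nlinarith [norm_nonneg u, h]

lemma abs_sub_le_abs_one_sub (u z : ℂ) (hu : ‖u‖ ≤ 1) (hz : ‖z‖ ≤ 1) :
    ‖z - u‖ ≤ ‖1 - (starRingEnd ℂ) u * z‖ := by
  have h1 : Complex.normSq (z - u) ≤ Complex.normSq (1 - (starRingEnd ℂ) u * z) := by
    have hu' := sq_abs_le' u hu
    have hz' := sq_abs_le' z hz
    simp only [Complex.normSq_apply, Complex.sub_re, Complex.sub_im, Complex.mul_re,
      Complex.mul_im, Complex.one_re, Complex.one_im, Complex.conj_re, Complex.conj_im]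
    nlinarith [mul_nonneg (sub_nonneg.2 hu') (sub_nonneg.2 hz')]
  rw [Complex.norm_def, Complex.norm_def]
  exact Real.sqrt_le_sqrt h1

lemma abs_exp_I_mul (ξ : ℝ) : ‖Complex.exp (Complex.I * ξ)‖ = 1 := by
  rw [mul_comm]; exact Complex.norm_exp_ofReal_mul_I ξ

lemma denom_ne (u z : ℂ) (hu : ‖u‖ < 1) (hz : ‖z‖ ≤ 1) :
    1 - (starRingEnd ℂ) u * z ≠ 0 := by
  intro h
  have h2 : ‖(starRingEnd ℂ) u * z‖ = 1 := by
    have : (starRingEnd ℂ) u * z = 1 := by linear_combination -h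
    rw [this]; simp
  rw [norm_mul, Complex.norm_conj] at h2
  nlinarith [norm_nonneg z, norm_nonneg u]

lemma abs_autMap_le (ξ : ℝ) (u z : ℂ) (hu : ‖u‖ < 1) (hz : ‖z‖ ≤ 1) :
    ‖autMap ξ u z‖ ≤ 1 := by
  unfold autMap
  rw [norm_mul, norm_div, abs_exp_I_mul, one_mul]
  have hd := denom_ne u z hu hz
  have hdpos : 0 < ‖1 - (starRingEnd ℂ) u * z‖ := by
    simpa [norm_pos_iff] using hd
  rw [div_le_one hdpos]
  exact abs_sub_le_abs_one_sub u z hu.le hz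

lemma abs_autMap_eq_one (ξ : ℝ) (u z : ℂ) (hu : ‖u‖ < 1) (hz : ‖z‖ = 1) :
    ‖autMap ξ u z‖ = 1 := by
  unfold autMap
  have hzz : z * (starRingEnd ℂ) z = 1 := by
    rw [Complex.mul_conj]
    rw [← Complex.sq_norm, hz]; norm_num
  have key : 1 - (starRingEnd ℂ) u * z = z * (starRingEnd ℂ) (z - u) := by
    rw [map_sub]; linear_combination -hzz
  rw [norm_mul, norm_div, abs_exp_I_mul, one_mul, key, norm_mul, Complex.norm_conj, hz, one_mul]
  have hne : ‖z - u‖ ≠ 0 := by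
    intro h0
    have : z = u := by
      have := norm_eq_zero.mp h0
      linear_combination this
    rw [this] at hz; exact absurd hz (by linarith)
  exact div_self hne

lemma exists_root (u v μ e : ℂ)
    (he2 : e * e = μ) (habse : ‖e‖ = 1)
    (hμ : μ * (starRingEnd ℂ) μ = 1)
    (hBA : ‖1 + μ + u * (starRingEnd ℂ) v + μ * (starRingEnd ℂ) u * v‖
      ≤ 2 * ‖(starRingEnd ℂ) v + μ * (starRingEnd ℂ) u‖) :
    ∃ z₀ : ℂ, ‖z₀‖ = 1 ∧
      (z₀ - u) * (1 - (starRingEnd ℂ) v * z₀)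
        + μ * ((z₀ - v) * (1 - (starRingEnd ℂ) u * z₀)) = 0 := by
  set A : ℂ := (starRingEnd ℂ) v + μ * (starRingEnd ℂ) u with hA
  set B : ℂ := 1 + μ + u * (starRingEnd ℂ) v + μ * (starRingEnd ℂ) u * v with hB
  clear_value A B
  have hμB : μ * (starRingEnd ℂ) B = B := by
    rw [hB]
    simp only [map_add, map_mul, map_one, Complex.conj_conj]
    linear_combination (1 + u * (starRingEnd ℂ) v) * hμ
  have hAc : (starRingEnd ℂ) A = v + (starRingEnd ℂ) μ * u := by
    rw [hA]; simp only [map_add, map_mul, Complex.conj_conj]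
  have hCA : u + μ * v = μ * (starRingEnd ℂ) A := by
    rw [hAc]; linear_combination (-u) * hμ
  by_cases hA0 : A = 0
  · have hB0 : B = 0 := by
      have : ‖B‖ ≤ 0 := by rw [hA0] at hBA; simpa using hBA
      exact norm_eq_zero.mp (le_antisymm this (norm_nonneg B))
    have hC0 : u + μ * v = 0 := by rw [hCA, hA0]; simp
    refine ⟨1, by simp, ?_⟩
    have hA0' : (starRingEnd ℂ) v + μ * (starRingEnd ℂ) u = 0 := by rw [← hA]; exact hA0
    have hB0' : 1 + μ + u * (starRingEnd ℂ) v + μ * (starRingEnd ℂ) u * v = 0 := by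
      rw [← hB]; exact hB0
    linear_combination hB0' - hA0' - hC0
  · have hee : e * (starRingEnd ℂ) e = 1 := by
      rw [Complex.mul_conj, ← Complex.sq_norm, habse]; norm_num
    set β : ℂ := B * (starRingEnd ℂ) e with hβ
    clear_value β
    have hBb : B = β * e := by
      rw [hβ]; linear_combination (-B) * hee
    have hβconj : (starRingEnd ℂ) β = β := by
      rw [hβ, map_mul, Complex.conj_conj]
      linear_combination ((starRingEnd ℂ) e) * hμB
        + ((starRingEnd ℂ) B * (starRingEnd ℂ) e) * he2 - ((starRingEnd ℂ) B * e) * hee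
    have hβim : β.im = 0 := Complex.conj_eq_iff_im.mp hβconj
    have habsβ : ‖β‖ = ‖B‖ := by
      rw [hβ, norm_mul, Complex.norm_conj, habse, mul_one]
    have hsnn : 0 ≤ 4 * (‖A‖)^2 - (‖B‖)^2 := by
      nlinarith [norm_nonneg A, norm_nonneg B, hBA]
    set s : ℝ := Real.sqrt (4 * (‖A‖)^2 - (‖B‖)^2) with hs
    have hs2 : s^2 = 4 * (‖A‖)^2 - (‖B‖)^2 := Real.sq_sqrt hsnn
    clear_value s
    have hβre2 : β.re^2 = (‖B‖)^2 := by
      have h1 : Complex.normSq β = β.re^2 + β.im^2 := by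
        rw [Complex.normSq_apply]; ring
      rw [← habsβ, Complex.sq_norm, h1, hβim]; ring
    have h2A : (2:ℂ) * A ≠ 0 := by simp [hA0]
    refine ⟨e * (β + Complex.I * (s:ℂ)) / (2 * A), ?_, ?_⟩
    · have habsw : ‖β + Complex.I * (s:ℂ)‖ = 2 * ‖A‖ := by
        have h := Complex.sq_norm (β + Complex.I * (s:ℂ))
        rw [Complex.normSq_apply] at h
        simp only [Complex.add_re, Complex.add_im, Complex.mul_re, Complex.mul_im,
          Complex.I_re, Complex.I_im, Complex.ofReal_re, Complex.ofReal_im] at h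
        have h2 : ‖β + Complex.I * (s:ℂ)‖^2 = (2 * ‖A‖)^2 := by
          rw [h, hβim]; ring_nf; nlinarith [hβre2, hs2]
        have hnn : (0:ℝ) ≤ ‖β + Complex.I * (s:ℂ)‖ := norm_nonneg _
        have hnn2 : (0:ℝ) ≤ 2 * ‖A‖ := by positivity
        rw [← Real.sqrt_sq hnn, h2, Real.sqrt_sq hnn2]
      rw [norm_div, norm_mul, habse, one_mul, habsw, norm_mul]
      rw [Complex.norm_two]
      have : ‖A‖ ≠ 0 := by simpa using hA0
      field_simp
    · have hAA : A * (starRingEnd ℂ) A = ((‖A‖ : ℂ))^2 := by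
        rw [Complex.mul_conj]
        norm_cast
        exact (Complex.sq_norm A).symm
      have hβ2 : β * β = ((‖B‖ : ℂ))^2 := by
        have h1 : β * (starRingEnd ℂ) β = (Complex.normSq β : ℂ) := Complex.mul_conj β
        rw [hβconj] at h1
        rw [h1]
        norm_cast
        rw [← Complex.sq_norm, habsβ]
      have hs2r : s * s = 4 * (‖A‖)^2 - (‖B‖)^2 := by nlinarith [hs2]
      have hs2' : ((s:ℂ)) * (s:ℂ)
          = 4 * ((‖A‖ : ℂ))^2 - ((‖B‖ : ℂ))^2 := by
        exact_mod_cast hs2r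
      have hroot : A * (e * (β + Complex.I * (s:ℂ)))^2
          - B * (e * (β + Complex.I * (s:ℂ))) * (2*A)
          + (u + μ * v) * ((2*A)*(2*A)) = 0 := by
        linear_combination ((2*A)*(2*A)) * hCA - (e * (β + Complex.I * (s:ℂ))) * (2*A) * hBb
          + (A * (β + Complex.I * (s:ℂ))^2 - β * (β + Complex.I * (s:ℂ)) * (2*A)) * he2
          + (A * μ * (s:ℂ) * (s:ℂ)) * Complex.I_mul_I - A * μ * hβ2 - A * μ * hs2'
          + 4 * μ * A * hAA
      field_simp [h2A]
      linear_combination (-1) * hroot + (e * (β + Complex.I * (s:ℂ)))^2 * hA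
        - (e * (β + Complex.I * (s:ℂ))) * (2*A) * hB

theorem dist_eq_two_case
    (ξ η : ℝ) (u v : ℂ) (hu : u ∈ unitDisk) (hv : v ∈ unitDisk)
    (hcond : ‖(Complex.exp (Complex.I * (η - ξ))
          * ((1 - (starRingEnd ℂ) u * v) / (1 - u * (starRingEnd ℂ) v)) + 1)‖
      ≤ 2 * pseudoHyp u v) :
    (⨆ z : unitDisk, ‖autMap ξ u z - autMap η v z‖) = 2 := by
  have hu' : ‖u‖ < 1 := hu
  have hv' : ‖v‖ < 1 := hv
  set μ : ℂ := Complex.exp (Complex.I * ((η:ℂ) - (ξ:ℂ))) with hμdef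
  have habsμ : ‖μ‖ = 1 := by
    rw [hμdef]
    have : Complex.I * ((η:ℂ) - (ξ:ℂ)) = Complex.I * ((η - ξ : ℝ) : ℂ) := by push_cast; ring
    rw [this]; exact abs_exp_I_mul (η - ξ)
  have hμμ : μ * (starRingEnd ℂ) μ = 1 := by
    rw [Complex.mul_conj, ← Complex.sq_norm, habsμ]; norm_num
  -- denominators
  have hd2 : (1 : ℂ) - (starRingEnd ℂ) u * v ≠ 0 := denom_ne u v hu' hv'.le
  have hd1 : (1 : ℂ) - u * (starRingEnd ℂ) v ≠ 0 := by
    have h := denom_ne ((starRingEnd ℂ) u) ((starRingEnd ℂ) v)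
      (by rwa [Complex.norm_conj]) (by rw [Complex.norm_conj]; exact hv'.le)
    rwa [Complex.conj_conj] at h
  have habsd : ‖1 - u * (starRingEnd ℂ) v‖
      = ‖1 - (starRingEnd ℂ) u * v‖ := by
    rw [← Complex.norm_conj (1 - u * (starRingEnd ℂ) v)]
    congr 1
    simp only [map_sub, map_one, map_mul, Complex.conj_conj]
  -- from hcond : |μ d2 + d1| ≤ 2 |u - v|
  have hcond' : ‖μ * (1 - (starRingEnd ℂ) u * v) + (1 - u * (starRingEnd ℂ) v)‖
      ≤ 2 * ‖u - v‖ := by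
    have hrw : μ * ((1 - (starRingEnd ℂ) u * v) / (1 - u * (starRingEnd ℂ) v)) + 1
        = (μ * (1 - (starRingEnd ℂ) u * v) + (1 - u * (starRingEnd ℂ) v))
          / (1 - u * (starRingEnd ℂ) v) := by
      field_simp
    rw [hrw, norm_div] at hcond
    unfold pseudoHyp at hcond
    rw [norm_div] at hcond
    have hpos1 : 0 < ‖1 - u * (starRingEnd ℂ) v‖ := by
      simpa [norm_pos_iff] using hd1
    have hpos2 : 0 < ‖1 - (starRingEnd ℂ) u * v‖ := by
      simpa [norm_pos_iff] using hd2
    rw [div_le_iff₀ hpos1] at hcond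
    calc ‖μ * (1 - (starRingEnd ℂ) u * v) + (1 - u * (starRingEnd ℂ) v)‖
        ≤ 2 * (‖u - v‖ / ‖1 - (starRingEnd ℂ) u * v‖)
          * ‖1 - u * (starRingEnd ℂ) v‖ := hcond
      _ = 2 * ‖u - v‖ := by rw [habsd, mul_assoc, div_mul_cancel₀ _ hpos2.ne']
  -- key inequality |B| ≤ 2|A|
  have hμne : μ ≠ 0 := Complex.exp_ne_zero _
  have hconjμ : (starRingEnd ℂ) μ = μ⁻¹ :=
    eq_inv_of_mul_eq_one_left (by rw [mul_comm]; exact hμμ)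
  have hident : (1 + μ + u * (starRingEnd ℂ) v + μ * (starRingEnd ℂ) u * v)
        * (starRingEnd ℂ) (1 + μ + u * (starRingEnd ℂ) v + μ * (starRingEnd ℂ) u * v)
        - 4 * (((starRingEnd ℂ) v + μ * (starRingEnd ℂ) u)
          * (starRingEnd ℂ) ((starRingEnd ℂ) v + μ * (starRingEnd ℂ) u))
      = (μ * (1 - (starRingEnd ℂ) u * v) + (1 - u * (starRingEnd ℂ) v))
        * (starRingEnd ℂ) (μ * (1 - (starRingEnd ℂ) u * v) + (1 - u * (starRingEnd ℂ) v))
        - 4 * ((u - v) * (starRingEnd ℂ) (u - v)) := by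
    simp only [map_add, map_sub, map_mul, map_one, Complex.conj_conj, hconjμ]
    field_simp
    ring
  have hmc : ∀ z : ℂ, z * (starRingEnd ℂ) z = ((‖z‖ : ℂ))^2 := by
    intro z
    rw [Complex.mul_conj]
    norm_cast
    exact (Complex.sq_norm z).symm
  rw [hmc, hmc, hmc, hmc] at hident
  have hidentR : (‖1 + μ + u * (starRingEnd ℂ) v + μ * (starRingEnd ℂ) u * v‖)^2
        - 4 * (‖(starRingEnd ℂ) v + μ * (starRingEnd ℂ) u‖)^2
      = (‖μ * (1 - (starRingEnd ℂ) u * v) + (1 - u * (starRingEnd ℂ) v)‖)^2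
        - 4 * (‖u - v‖)^2 := by
    exact_mod_cast hident
  have hBA : ‖1 + μ + u * (starRingEnd ℂ) v + μ * (starRingEnd ℂ) u * v‖
      ≤ 2 * ‖(starRingEnd ℂ) v + μ * (starRingEnd ℂ) u‖ := by
    set x := ‖1 + μ + u * (starRingEnd ℂ) v + μ * (starRingEnd ℂ) u * v‖
    set y := ‖(starRingEnd ℂ) v + μ * (starRingEnd ℂ) u‖
    have hx : 0 ≤ x := norm_nonneg _
    have hy : 0 ≤ y := norm_nonneg _
    have hsq : x^2 ≤ 4*y^2 := by
      nlinarith [hcond', hidentR, norm_nonneg (u - v),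
        norm_nonneg (μ * (1 - (starRingEnd ℂ) u * v) + (1 - u * (starRingEnd ℂ) v))]
    nlinarith [hsq, hx, hy]
  -- get the boundary root
  set e : ℂ := Complex.exp (Complex.I * ((((η - ξ)/2 : ℝ)) : ℂ)) with hedef
  have he2 : e * e = μ := by
    rw [hedef, hμdef, ← Complex.exp_add]
    congr 1
    push_cast
    ring
  have habse : ‖e‖ = 1 := abs_exp_I_mul _
  obtain ⟨z₀, hz₀, heq⟩ := exists_root u v μ e he2 habse hμμ hBA
  -- f(z₀) = -g(z₀)
  have hdz1 : (1 : ℂ) - (starRingEnd ℂ) u * z₀ ≠ 0 := denom_ne u z₀ hu' hz₀.le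
  have hdz2 : (1 : ℂ) - (starRingEnd ℂ) v * z₀ ≠ 0 := denom_ne v z₀ hv' hz₀.le
  have hYX : Complex.exp (Complex.I * (η:ℂ)) = Complex.exp (Complex.I * (ξ:ℂ)) * μ := by
    rw [hμdef, ← Complex.exp_add]
    congr 1
    ring
  have hfg : autMap η v z₀ = - autMap ξ u z₀ := by
    unfold autMap
    rw [hYX, ← sub_eq_zero, sub_neg_eq_add, ← mul_div_assoc, ← mul_div_assoc,
      div_add_div _ _ hdz2 hdz1, div_eq_zero_iff]
    left
    linear_combination Complex.exp (Complex.I * (ξ:ℂ)) * heq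
  have hF2 : ‖autMap ξ u z₀ - autMap η v z₀‖ = 2 := by
    rw [hfg, sub_neg_eq_add, ← two_mul, norm_mul, Complex.norm_two,
      abs_autMap_eq_one ξ u z₀ hu' hz₀]
    norm_num
  -- now the sup
  haveI : Nonempty unitDisk := ⟨⟨0, by simp [unitDisk]⟩⟩
  have hbdd : BddAbove (Set.range fun z : unitDisk =>
      ‖autMap ξ u z - autMap η v z‖) := by
    refine ⟨2, ?_⟩
    rintro x ⟨z, rfl⟩
    have h1 := abs_autMap_le ξ u z hu' (le_of_lt z.2)
    have h2 := abs_autMap_le η v z hv' (le_of_lt z.2)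
    calc ‖autMap ξ u z - autMap η v z‖
        ≤ ‖autMap ξ u z‖ + ‖autMap η v z‖ := by
          simpa using norm_sub_le (autMap ξ u (z:ℂ)) (autMap η v (z:ℂ))
      _ ≤ 2 := by linarith
  apply le_antisymm
  · apply ciSup_le
    intro z
    have h1 := abs_autMap_le ξ u z hu' (le_of_lt z.2)
    have h2 := abs_autMap_le η v z hv' (le_of_lt z.2)
    calc ‖autMap ξ u z - autMap η v z‖
        ≤ ‖autMap ξ u z‖ + ‖autMap η v z‖ := by
          simpa using norm_sub_le (autMap ξ u (z:ℂ)) (autMap η v (z:ℂ))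
      _ ≤ 2 := by linarith
  · -- limit argument
    set φ : ℝ → ℝ := fun t =>
      ‖autMap ξ u ((t:ℂ) * z₀) - autMap η v ((t:ℂ) * z₀)‖ with hφdef
    have hc1 : ContinuousAt (fun z : ℂ => autMap ξ u z) z₀ := by
      unfold autMap
      apply ContinuousAt.mul continuousAt_const
      exact ContinuousAt.div (by fun_prop) (by fun_prop) hdz1
    have hc2 : ContinuousAt (fun z : ℂ => autMap η v z) z₀ := by
      unfold autMap
      apply ContinuousAt.mul continuousAt_const
      exact ContinuousAt.div (by fun_prop) (by fun_prop) hdz2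
    have hcoe : Continuous (fun t : ℝ => (t:ℂ) * z₀) := by fun_prop
    have hφcont : ContinuousAt φ 1 := by
      have hptw : ((1:ℝ):ℂ) * z₀ = z₀ := by simp
      have h3 : ContinuousAt (fun z : ℂ =>
          ‖autMap ξ u z - autMap η v z‖) z₀ :=
        continuous_norm.continuousAt.comp (hc1.sub hc2)
      have h5 : ContinuousAt (fun z : ℂ =>
          ‖autMap ξ u z - autMap η v z‖) (((1:ℝ):ℂ) * z₀) := by rwa [hptw]
      exact ContinuousAt.comp (f := fun t : ℝ => (t:ℂ) * z₀) (x := (1:ℝ)) h5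
        hcoe.continuousAt
    have h1z : ((1:ℝ):ℂ) * z₀ = z₀ := by simp
    have hφ1 : φ 1 = 2 := by
      simp only [hφdef, h1z]; exact hF2
    have htend : Filter.Tendsto φ (nhdsWithin 1 (Set.Iio 1)) (nhds 2) := by
      rw [← hφ1]
      exact hφcont.tendsto.mono_left nhdsWithin_le_nhds
    have hev : ∀ᶠ t in nhdsWithin (1:ℝ) (Set.Iio 1),
        φ t ≤ ⨆ z : unitDisk, ‖autMap ξ u z - autMap η v z‖ := by
      filter_upwards [Ioo_mem_nhdsLT_of_mem
        (show (1:ℝ) ∈ Set.Ioc (0:ℝ) 1 by constructor <;> norm_num)] with t ht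
      have hmem : ((t:ℂ) * z₀) ∈ unitDisk := by
        show ‖(t:ℂ) * z₀‖ < 1
        rw [norm_mul, hz₀, mul_one, Complex.norm_real, Real.norm_eq_abs, abs_of_pos ht.1]
        exact ht.2
      exact le_ciSup hbdd (⟨(t:ℂ) * z₀, hmem⟩ : unitDisk)
    exact le_of_tendsto htend hev
end
end

section
/- For any u ∈ 𝔻, s ∈ ℝ, and h ∈ ℂ, the limit as Δt → 0⁺ of (1 − λ(Δt))/Δt equals i·(2·Im(ū·h) − s·(1−|u|²))/(1−|u|²), where λ(Δt) = e^{i·s·Δt}·(1 − ū·(u + h·Δt))/(1 − u·conj(u + h·Δt)). -/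
open Complex Filter

noncomputable section

theorem lambda_derivative_limit (u : ℂ) (hu : u ∈ unitDisk) (s : ℝ) (h : ℂ) :
    Filter.Tendsto
      (fun t : ℝ =>
        (1 - Complex.exp (Complex.I * (s * t))
            * ((1 - (starRingEnd ℂ) u * (u + h * t))
                / (1 - u * (starRingEnd ℂ) (u + h * t)))) / (t : ℂ))
      (nhdsWithin 0 (Set.Ioi 0))
      (nhds (Complex.I *
        (((2 * ((starRingEnd ℂ) u * h).im - s * (1 - ‖u‖ ^ 2))
            / (1 - ‖u‖ ^ 2) : ℝ) : ℂ))) := by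
  set c := (starRingEnd ℂ) u with hc
  have hA0 : (1 : ℝ) - ‖u‖ ^ 2 ≠ 0 := by
    have hu' : ‖u‖ < 1 := hu
    nlinarith [norm_nonneg u]
  have hAc : ((1 - ‖u‖ ^ 2 : ℝ) : ℂ) = 1 - u * c := by
    push_cast
    rw [hc, Complex.mul_conj, Complex.normSq_eq_norm_sq]
    push_cast
    ring
  have hAc0 : (1 : ℂ) - u * c ≠ 0 := by
    rw [← hAc]
    exact_mod_cast hA0
  set F : ℝ → ℂ := fun t => Complex.exp (Complex.I * (s * t)) *
      ((1 - c * (u + h * t)) / (1 - u * (starRingEnd ℂ) (u + h * t))) with hF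
  have hF0 : F 0 = 1 := by
    have e : F 0 = (1 - c * u) / (1 - u * c) := by simp [hF, ← hc]
    rw [e, show (1:ℂ) - c * u = 1 - u * c from by ring, div_self hAc0]
  have ht : HasDerivAt (fun t : ℝ => (t : ℂ)) 1 0 := Complex.ofRealCLM.hasDerivAt
  have h1 : HasDerivAt (fun t : ℝ => Complex.I * (s * t)) (Complex.I * s) 0 := by
    have := ht.const_mul (Complex.I * s)
    simpa [mul_assoc] using this
  have hexp : HasDerivAt (fun t : ℝ => Complex.exp (Complex.I * (s * t)))
      (Complex.exp (Complex.I * (s * (0:ℝ))) * (Complex.I * s)) 0 := h1.cexp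
  have hN : HasDerivAt (fun t : ℝ => 1 - c * (u + h * t)) (-(c * h)) 0 := by
    have := (((ht.const_mul h).const_add u).const_mul c).const_sub 1
    simpa using this
  have hDfun : (fun t : ℝ => 1 - u * (starRingEnd ℂ) (u + h * t)) =
      (fun t : ℝ => 1 - u * (c + (starRingEnd ℂ) h * t)) := by
    funext t
    simp [map_add, map_mul, Complex.conj_ofReal, hc]
  have hD : HasDerivAt (fun t : ℝ => 1 - u * (starRingEnd ℂ) (u + h * t))
      (-(u * (starRingEnd ℂ) h)) 0 := by
    rw [hDfun]
    have := (((ht.const_mul ((starRingEnd ℂ) h)).const_add c).const_mul u).const_sub 1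
    simpa using this
  have hD0 : (1 : ℂ) - u * (starRingEnd ℂ) (u + h * (0:ℝ)) ≠ 0 := by
    simpa [← hc] using hAc0
  have hq := hN.div hD hD0
  have hFd := hexp.mul hq
  have hval : Complex.exp (Complex.I * (s * (0:ℝ))) * (Complex.I * s) *
        ((1 - c * (u + h * (0:ℝ))) / (1 - u * (starRingEnd ℂ) (u + h * (0:ℝ)))) +
        Complex.exp (Complex.I * (s * (0:ℝ))) *
        ((-(c * h) * (1 - u * (starRingEnd ℂ) (u + h * (0:ℝ))) -
          (1 - c * (u + h * (0:ℝ))) * -(u * (starRingEnd ℂ) h)) /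
          (1 - u * (starRingEnd ℂ) (u + h * (0:ℝ))) ^ 2) =
      Complex.I * s + (u * (starRingEnd ℂ) h - c * h) / (1 - u * c) := by
    have e1 : (starRingEnd ℂ) (u + h * ((0:ℝ):ℂ)) = c := by simp [hc]
    rw [e1]
    push_cast
    simp only [mul_zero, add_zero, Complex.exp_zero, one_mul]
    have hcu : (1 : ℂ) - c * u ≠ 0 := by rwa [mul_comm]
    field_simp
    ring
  simp only [Pi.div_apply] at hFd
  rw [hval] at hFd
  have hslope := (hasDerivAt_iff_tendsto_slope.mp hFd).neg
  have hmono : nhdsWithin (0:ℝ) (Set.Ioi 0) ≤ nhdsWithin 0 {(0:ℝ)}ᶜ :=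
    nhdsWithin_mono 0 (fun x hx => ne_of_gt hx)
  have hten := hslope.mono_left hmono
  have hsub : c * h - u * (starRingEnd ℂ) h = 2 * (c * h).im * Complex.I := by
    have h2 := Complex.sub_conj (c * h)
    have h3 : (starRingEnd ℂ) (c * h) = u * (starRingEnd ℂ) h := by
      simp [map_mul, hc]
    rw [h3] at h2
    simpa using h2
  have hA0' : ((1 - ‖u‖ ^ 2 : ℝ) : ℂ) ≠ 0 := by exact_mod_cast hA0
  have hL : Complex.I *
        (((2 * (c * h).im - s * (1 - ‖u‖ ^ 2))
            / (1 - ‖u‖ ^ 2) : ℝ) : ℂ) =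
      -(Complex.I * s + (u * (starRingEnd ℂ) h - c * h) / (1 - u * c)) := by
    have h2m : ((2 * (c * h).im : ℝ) : ℂ) = -Complex.I * (c * h - u * (starRingEnd ℂ) h) := by
      rw [hsub]
      push_cast
      linear_combination (2 * ((c * h).im : ℂ)) * Complex.I_sq
    have hsplit : (((2 * (c * h).im - s * (1 - ‖u‖ ^ 2))
          / (1 - ‖u‖ ^ 2) : ℝ) : ℂ) =
        (((2 * (c * h).im : ℝ) : ℂ) - s * ((1 - ‖u‖ ^ 2 : ℝ) : ℂ))
          / ((1 - ‖u‖ ^ 2 : ℝ) : ℂ) := by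
      push_cast
      ring
    rw [hsplit, h2m, hAc]
    have hcu : (1 : ℂ) - c * u ≠ 0 := by rwa [mul_comm]
    field_simp
    linear_combination (u * (starRingEnd ℂ) h - c * h) * Complex.I_sq
  rw [hL]
  apply hten.congr
  intro t
  have hsl : slope F 0 t = (t : ℂ)⁻¹ * (F t - 1) := by
    rw [slope, hF0]
    simp [vsub_eq_sub, Complex.real_smul, Complex.ofReal_inv]
  change -slope F 0 t = _
  rw [hsl, hF]
  simp only []
  rw [div_eq_mul_inv, mul_comm]
  ring
end
end

section
/- For any u ∈ 𝔻, s ∈ ℝ, and h ∈ ℂ with (s,h) ≠ (0,0), the limit as Δt → 0⁺ of d_{H^∞}(f_{ξ,u}, f_{ξ+sΔt, u+hΔt})/Δt exists and equals F(u, s, h) := (2|h| + |2·Im(ū·h) − s·(1−|u|²)|)/(1−|u|²). -/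
open Complex Filter

noncomputable section

set_option maxHeartbeats 1000000

noncomputable def dHinf (φ ψ : ℂ → ℂ) : ℝ :=
  ⨆ z : unitDisk, ‖φ z - ψ z‖

noncomputable def Complex.abs : AbsoluteValue ℂ ℝ where
  toFun z := ‖z‖
  map_mul' := norm_mul
  nonneg' := norm_nonneg
  eq_zero' _ := norm_eq_zero
  add_le' := norm_add_le

namespace Complex
lemma abs_def' (z : ℂ) : Complex.abs z = ‖z‖ := rfl
lemma norm_eq_abs (z : ℂ) : ‖z‖ = Complex.abs z := rfl
@[simp] lemma abs_conj (z : ℂ) : Complex.abs ((starRingEnd ℂ) z) = Complex.abs z :=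
  Complex.norm_conj z
lemma sq_abs (z : ℂ) : Complex.abs z ^ 2 = normSq z := Complex.sq_norm z
@[simp] lemma abs_ofReal (r : ℝ) : Complex.abs (r : ℂ) = |r| := Complex.norm_real r
@[simp] lemma abs_I : Complex.abs I = 1 := Complex.norm_I
@[simp] lemma abs_abs (z : ℂ) : Complex.abs (Complex.abs z : ℂ) = Complex.abs z := by
  rw [abs_ofReal, _root_.abs_of_nonneg (Complex.abs.nonneg z)]
lemma abs_exp (z : ℂ) : Complex.abs (exp z) = Real.exp z.re := Complex.norm_exp z
lemma abs_im_le_abs (z : ℂ) : |z.im| ≤ Complex.abs z := Complex.abs_im_le_norm z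
lemma continuous_abs : Continuous Complex.abs := continuous_norm
lemma abs_exp_sub_one_sub_id_le {x : ℂ} (hx : Complex.abs x ≤ 1) :
    Complex.abs (exp x - 1 - x) ≤ Complex.abs x ^ 2 := Complex.norm_exp_sub_one_sub_id_le hx
end Complex

namespace FinslerAux

/-- The infinitesimal generator (t-derivative of the family at t = 0). -/
noncomputable def W (ξ : ℝ) (u : ℂ) (s : ℝ) (h : ℂ) (z : ℂ) : ℂ :=
  Complex.exp (Complex.I * ξ) *
    ((Complex.I * s * (z - u) * (1 - (starRingEnd ℂ) u * z) - h * (1 - (starRingEnd ℂ) u * z)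
        + (starRingEnd ℂ) h * z * (z - u)) / (1 - (starRingEnd ℂ) u * z) ^ 2)

/-- The Finsler metric value. -/
noncomputable def Fv (u : ℂ) (s : ℝ) (h : ℂ) : ℝ :=
  (2 * Complex.abs h + |2 * ((starRingEnd ℂ) u * h).im - s * (1 - Complex.abs u ^ 2)|)
    / (1 - Complex.abs u ^ 2)

lemma tri (x y : ℂ) : Complex.abs (x - y) ≤ Complex.abs x + Complex.abs y := by
  simpa [sub_eq_add_neg] using Complex.abs.add_le x (-y)

lemma tri' (x y : ℂ) : Complex.abs x - Complex.abs y ≤ Complex.abs (x - y) := by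
  have := Complex.abs.add_le (x - y) y
  simp only [sub_add_cancel] at this
  linarith

lemma den_lb (u z : ℂ) (hz : Complex.abs z ≤ 1) :
    1 - Complex.abs u ≤ Complex.abs (1 - (starRingEnd ℂ) u * z) := by
  have h3 : Complex.abs ((starRingEnd ℂ) u * z) ≤ Complex.abs u := by
    rw [map_mul, Complex.abs_conj]
    calc Complex.abs u * Complex.abs z ≤ Complex.abs u * 1 := by gcongr
      _ = Complex.abs u := mul_one _
  have h2 := Complex.abs.add_le (1 - (starRingEnd ℂ) u * z) ((starRingEnd ℂ) u * z)
  simp only [sub_add_cancel, map_one] at h2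
  linarith

lemma den_ne (u z : ℂ) (hu : Complex.abs u < 1) (hz : Complex.abs z ≤ 1) :
    1 - (starRingEnd ℂ) u * z ≠ 0 := by
  intro hc
  have := den_lb u z hz
  rw [hc] at this
  simp at this
  linarith

lemma boundary_abs (ξ : ℝ) (u : ℂ) (s : ℝ) (h : ℂ) (z : ℂ) (hu : Complex.abs u < 1)
    (hz : Complex.abs z = 1) :
    Complex.abs (W ξ u s h z) = |s - 2 * (h / (z - u)).im| := by
  have hz1 : z * (starRingEnd ℂ) z = 1 := by
    rw [Complex.mul_conj]
    norm_cast
    rw [← Complex.sq_abs, hz]; norm_num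
  have hA : z - u ≠ 0 := by
    intro hc
    rw [sub_eq_zero] at hc
    rw [← hc] at hu
    rw [hz] at hu
    exact lt_irrefl 1 hu
  have hN : 0 < Complex.normSq (z - u) := by
    rwa [Complex.normSq_pos]
  have hD : 1 - (starRingEnd ℂ) u * z = z * (starRingEnd ℂ) (z - u) := by
    rw [map_sub]
    linear_combination -hz1
  have h1 : (z - u) * (starRingEnd ℂ) (z - u) = (Complex.normSq (z - u) : ℂ) :=
    Complex.mul_conj _
  have h2 : h * (starRingEnd ℂ) (z - u) - (starRingEnd ℂ) (h * (starRingEnd ℂ) (z - u))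
      = (2 * (h * (starRingEnd ℂ) (z - u)).im : ℝ) * Complex.I := Complex.sub_conj _
  rw [map_mul, Complex.conj_conj] at h2
  have hB : Complex.I * s * (z - u) * (1 - (starRingEnd ℂ) u * z)
        - h * (1 - (starRingEnd ℂ) u * z) + (starRingEnd ℂ) h * z * (z - u)
      = z * (Complex.I *
          (((s * Complex.normSq (z - u) - 2 * (h * (starRingEnd ℂ) (z - u)).im : ℝ)) : ℂ)) := by
    rw [hD]
    push_cast at h2 ⊢
    linear_combination (Complex.I * (s : ℂ) * z) * h1 - z * h2
  have h3 : h * (starRingEnd ℂ) (z - u) = (Complex.normSq (z - u) : ℂ) * (h / (z - u)) := by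
    rw [← h1]; field_simp
  have h4 : (h * (starRingEnd ℂ) (z - u)).im = Complex.normSq (z - u) * (h / (z - u)).im := by
    rw [h3, Complex.im_ofReal_mul]
  have habsD : Complex.abs (1 - (starRingEnd ℂ) u * z) = Complex.abs (z - u) := by
    rw [hD, map_mul, hz, Complex.abs_conj, one_mul]
  unfold W
  rw [hB, map_mul, map_div₀, map_mul, map_mul, map_pow, habsD]
  have hexp1 : Complex.abs (Complex.exp (Complex.I * ξ)) = 1 := by
    rw [Complex.abs_exp]; simp
  rw [hexp1, hz, Complex.abs_I, Complex.abs_ofReal, h4]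
  rw [← Complex.sq_abs] at hN ⊢
  have hAa : (0:ℝ) < Complex.abs (z - u) ^ 2 := hN
  have : s * Complex.abs (z-u) ^ 2 - 2 * (Complex.abs (z-u) ^2 * (h / (z - u)).im)
      = Complex.abs (z-u)^2 * (s - 2 * (h / (z-u)).im) := by ring
  rw [this, abs_mul, abs_of_pos hAa]
  rw [one_mul, one_mul, one_mul, mul_div_cancel_left₀ _ hAa.ne']

lemma him_gen (u : ℂ) (h : ℂ) (z : ℂ) (hA : z - u ≠ 0) :
    (1 - Complex.abs u ^ 2) * (h / (z - u)).im
      = ((starRingEnd ℂ) u * h).im + (h * ((1 - (starRingEnd ℂ) u * z) / (z - u))).im := by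
  have husq : ((1 - Complex.abs u ^ 2 : ℝ) : ℂ) = 1 - u * (starRingEnd ℂ) u := by
    rw [Complex.mul_conj, ← Complex.sq_abs]
    push_cast
    ring
  have hid : ((1 - Complex.abs u ^ 2 : ℝ) : ℂ) * (h / (z - u))
      = (starRingEnd ℂ) u * h + h * ((1 - (starRingEnd ℂ) u * z) / (z - u)) := by
    rw [husq]
    field_simp
    ring
  have := congrArg Complex.im hid
  rwa [Complex.im_ofReal_mul, Complex.add_im] at this

lemma boundary_le (u : ℂ) (s : ℝ) (h : ℂ) (z : ℂ) (hu : Complex.abs u < 1)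
    (hz : Complex.abs z = 1) :
    |s - 2 * (h / (z - u)).im| ≤ Fv u s h := by
  have hu0 : 0 ≤ Complex.abs u := Complex.abs.nonneg u
  have d1 : 0 < 1 - Complex.abs u ^ 2 := by nlinarith
  have hz1 : z * (starRingEnd ℂ) z = 1 := by
    rw [Complex.mul_conj]; norm_cast; rw [← Complex.sq_abs, hz]; norm_num
  have hA : z - u ≠ 0 := by
    intro hc; rw [sub_eq_zero] at hc; rw [← hc, hz] at hu; exact lt_irrefl 1 hu
  have hD : 1 - (starRingEnd ℂ) u * z = z * (starRingEnd ℂ) (z - u) := by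
    rw [map_sub]; linear_combination -hz1
  have him := him_gen u h z hA
  have hzeta : Complex.abs (h * ((1 - (starRingEnd ℂ) u * z) / (z - u))) = Complex.abs h := by
    rw [map_mul, map_div₀, hD, map_mul, hz, Complex.abs_conj, one_mul, div_self, mul_one]
    intro hc; exact hA (Complex.abs.eq_zero.mp hc)
  have himb : |(h * ((1 - (starRingEnd ℂ) u * z) / (z - u))).im| ≤ Complex.abs h := by
    rw [← hzeta]; exact Complex.abs_im_le_abs _
  rw [Fv, le_div_iff₀ d1]
  have key : (s - 2 * (h / (z - u)).im) * (1 - Complex.abs u ^ 2)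
      = (s * (1 - Complex.abs u ^ 2) - 2 * ((starRingEnd ℂ) u * h).im)
        - 2 * (h * ((1 - (starRingEnd ℂ) u * z) / (z - u))).im := by
    linear_combination (-2 : ℝ) * him
  calc |s - 2 * (h / (z - u)).im| * (1 - Complex.abs u ^ 2)
      = |(s - 2 * (h / (z - u)).im) * (1 - Complex.abs u ^ 2)| := by
        rw [abs_mul, abs_of_pos d1]
    _ = |(s * (1 - Complex.abs u ^ 2) - 2 * ((starRingEnd ℂ) u * h).im)
          - 2 * (h * ((1 - (starRingEnd ℂ) u * z) / (z - u))).im| := by rw [key]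
    _ ≤ |s * (1 - Complex.abs u ^ 2) - 2 * ((starRingEnd ℂ) u * h).im|
          + |2 * (h * ((1 - (starRingEnd ℂ) u * z) / (z - u))).im| := abs_sub _ _
    _ ≤ |2 * ((starRingEnd ℂ) u * h).im - s * (1 - Complex.abs u ^ 2)| + 2 * Complex.abs h := by
        rw [abs_sub_comm]
        gcongr
        rw [abs_mul, _root_.abs_two]
        linarith [himb]
    _ = 2 * Complex.abs h + |2 * ((starRingEnd ℂ) u * h).im - s * (1 - Complex.abs u ^ 2)| := by
        ring

lemma interior_le (ξ : ℝ) (u : ℂ) (s : ℝ) (h : ℂ) (z : ℂ) (hu : Complex.abs u < 1)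
    (hz : Complex.abs z ≤ 1) :
    Complex.abs (W ξ u s h z) ≤ Fv u s h := by
  have hdiff : DifferentiableOn ℂ (W ξ u s h)
      {w : ℂ | Complex.abs ((starRingEnd ℂ) u * w) < 1} := by
    intro w hw
    apply DifferentiableAt.differentiableWithinAt
    have hden : (1 - (starRingEnd ℂ) u * w) ≠ 0 := by
      intro hc
      have h1 : (starRingEnd ℂ) u * w = 1 := by linear_combination -hc
      rw [Set.mem_setOf_eq, h1] at hw
      simp at hw
    unfold W
    apply DifferentiableAt.const_mul
    apply DifferentiableAt.div
    · fun_prop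
    · fun_prop
    · exact pow_ne_zero 2 hden
  have hsub : Metric.closedBall (0:ℂ) 1 ⊆ {w : ℂ | Complex.abs ((starRingEnd ℂ) u * w) < 1} := by
    intro w hw
    rw [Metric.mem_closedBall, dist_zero_right, Complex.norm_eq_abs] at hw
    rw [Set.mem_setOf_eq, map_mul, Complex.abs_conj]
    calc Complex.abs u * Complex.abs w ≤ Complex.abs u * 1 := by gcongr
      _ < 1 := by rwa [mul_one]
  have hz' : z ∈ closure (Metric.ball (0:ℂ) 1) := by
    rw [closure_ball (0:ℂ) one_ne_zero, Metric.mem_closedBall, dist_zero_right,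
      Complex.norm_eq_abs]
    exact hz
  rw [← Complex.norm_eq_abs]
  refine Complex.norm_le_of_forall_mem_frontier_norm_le Metric.isBounded_ball ?_ ?_ hz'
  · exact (hdiff.mono (by rw [closure_ball (0:ℂ) one_ne_zero]; exact hsub)).diffContOnCl
  · intro w hw
    rw [frontier_ball (0:ℂ) one_ne_zero, mem_sphere_zero_iff_norm, Complex.norm_eq_abs] at hw
    rw [Complex.norm_eq_abs, boundary_abs ξ u s h w hu hw]
    exact boundary_le u s h w hu hw

instance : Nonempty unitDisk := ⟨⟨0, by simp [unitDisk]⟩⟩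

lemma sup_eq (ξ : ℝ) (u : ℂ) (s : ℝ) (h : ℂ) (hu : Complex.abs u < 1) :
    (⨆ z : unitDisk, Complex.abs (W ξ u s h z)) = Fv u s h := by
  have hball : ∀ z : unitDisk, Complex.abs (W ξ u s h z) ≤ Fv u s h := fun z =>
    interior_le ξ u s h z hu (le_of_lt z.2)
  have hbdd : BddAbove (Set.range fun z : unitDisk => Complex.abs (W ξ u s h z)) :=
    ⟨Fv u s h, by rintro x ⟨z, rfl⟩; exact hball z⟩
  apply le_antisymm (ciSup_le hball)
  have hu0 : 0 ≤ Complex.abs u := Complex.abs.nonneg u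
  have d1 : 0 < 1 - Complex.abs u ^ 2 := by nlinarith
  set d := 1 - Complex.abs u ^ 2 with hd
  set X := s * d - 2 * ((starRingEnd ℂ) u * h).im with hX
  set σ : ℝ := if 0 ≤ X then 1 else -1 with hσ
  have hσ1 : σ = 1 ∨ σ = -1 := by rw [hσ]; split_ifs <;> simp
  have hσa : |σ| = 1 := by rcases hσ1 with h1 | h1 <;> rw [h1] <;> norm_num
  set ζ : ℂ := if h = 0 then 1 else (-(σ:ℂ)) * Complex.I * ((Complex.abs h : ℂ) / h) with hζ
  have hζa : Complex.abs ζ = 1 := by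
    rw [hζ]; split_ifs with h0
    · simp
    · rw [map_mul, map_mul, map_div₀, Complex.abs_I, Complex.abs_ofReal, _root_.abs_of_nonneg (Complex.abs.nonneg h),
        map_neg_eq_map, Complex.abs_ofReal, hσa]
      field_simp [h0]
  have hζim : (h * ζ).im = -σ * Complex.abs h := by
    rw [hζ]; split_ifs with h0
    · simp [h0]
    · have : h * ((-(σ:ℂ)) * Complex.I * ((Complex.abs h : ℂ) / h))
          = ((-σ * Complex.abs h : ℝ) : ℂ) * Complex.I := by
        field_simp
        push_cast
        ring
      rw [this]
      simp
  have hζ1 : ζ * (starRingEnd ℂ) ζ = 1 := by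
    rw [Complex.mul_conj]
    norm_cast
    rw [← Complex.sq_abs, hζa]; norm_num
  have hden : ζ + (starRingEnd ℂ) u ≠ 0 := by
    intro hc
    have : ζ = -(starRingEnd ℂ) u := by linear_combination hc
    rw [this] at hζa
    rw [map_neg_eq_map, Complex.abs_conj] at hζa
    rw [hζa] at hu
    exact lt_irrefl 1 hu
  set z₀ : ℂ := (1 + ζ * u) / (ζ + (starRingEnd ℂ) u) with hz₀def
  have hz0mul : z₀ * (ζ + (starRingEnd ℂ) u) = 1 + ζ * u := div_mul_cancel₀ _ hden
  have hz₀a : Complex.abs z₀ = 1 := by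
    have hc1 : (starRingEnd ℂ) (1 + ζ * u) = (starRingEnd ℂ) ζ * (ζ + (starRingEnd ℂ) u) := by
      rw [map_add, map_mul, map_one]
      linear_combination -hζ1
    have h2 : Complex.abs (1 + ζ * u) = Complex.abs (ζ + (starRingEnd ℂ) u) := by
      rw [← Complex.abs_conj (1 + ζ * u), hc1, map_mul, Complex.abs_conj, hζa, one_mul]
    rw [hz₀def, map_div₀, h2, div_self]
    intro hc
    exact hden (Complex.abs.eq_zero.mp hc)
  have hz₀u : z₀ - u ≠ 0 := by
    intro hc
    rw [sub_eq_zero] at hc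
    rw [← hc, hz₀a] at hu
    exact lt_irrefl 1 hu
  have hζeq : (1 - (starRingEnd ℂ) u * z₀) / (z₀ - u) = ζ := by
    have hnum : 1 - (starRingEnd ℂ) u * z₀ = ζ * (z₀ - u) := by
      linear_combination -hz0mul
    rw [hnum]
    field_simp
  have him0 : d * (h / (z₀ - u)).im = ((starRingEnd ℂ) u * h).im + (-σ * Complex.abs h) := by
    rw [hd, him_gen u h z₀ hz₀u, hζeq, hζim]
  have hval : Complex.abs (W ξ u s h z₀) = Fv u s h := by
    rw [boundary_abs ξ u s h z₀ hu hz₀a]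
    have hq : s - 2 * (h / (z₀ - u)).im = (X + 2 * σ * Complex.abs h) / d := by
      rw [eq_div_iff (ne_of_gt d1)]
      rw [hX]
      nlinarith [him0]
    rw [hq, Fv, ← hd, abs_div, abs_of_pos d1]
    congr 1
    have habs : |X + 2 * σ * Complex.abs h| = 2 * Complex.abs h + |X| := by
      have hh0 : 0 ≤ Complex.abs h := Complex.abs.nonneg h
      rw [hσ]
      split_ifs with hX0
      · rw [_root_.abs_of_nonneg (by linarith), _root_.abs_of_nonneg hX0]; ring
      · push_neg at hX0
        rw [_root_.abs_of_nonpos (by nlinarith), _root_.abs_of_neg hX0]; ring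
    rw [habs]
    congr 1
    rw [abs_sub_comm]
  rw [← hval]
  have htendz : Filter.Tendsto (fun r : ℝ => (r : ℂ) * z₀) (nhdsWithin 1 (Set.Iio 1))
      (nhds z₀) := by
    have hcont : Continuous (fun r : ℝ => (r : ℂ) * z₀) := by fun_prop
    have h2 := hcont.tendsto (1 : ℝ)
    simp only [Complex.ofReal_one, one_mul] at h2
    exact h2.mono_left nhdsWithin_le_nhds
  have hWc : ContinuousAt (W ξ u s h) z₀ := by
    have hden0 : (1 - (starRingEnd ℂ) u * z₀) ≠ 0 := by
      intro hc
      have h1 : Complex.abs ((starRingEnd ℂ) u * z₀) = 1 := by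
        have : (starRingEnd ℂ) u * z₀ = 1 := by linear_combination -hc
        rw [this]; simp
      rw [map_mul, Complex.abs_conj, hz₀a, mul_one] at h1
      rw [h1] at hu; exact lt_irrefl 1 hu
    unfold W
    apply ContinuousAt.mul continuousAt_const
    apply ContinuousAt.div
    · fun_prop
    · fun_prop
    · exact pow_ne_zero 2 hden0
  have htend : Filter.Tendsto (fun r : ℝ => Complex.abs (W ξ u s h ((r : ℂ) * z₀)))
      (nhdsWithin 1 (Set.Iio 1)) (nhds (Complex.abs (W ξ u s h z₀))) :=
    (Complex.continuous_abs.continuousAt.comp hWc).tendsto.comp htendz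
  apply le_of_tendsto htend
  have hIoo : Set.Ioo (0:ℝ) 1 ∈ nhdsWithin (1:ℝ) (Set.Iio 1) := by
    rw [mem_nhdsWithin_iff_exists_mem_nhds_inter]
    exact ⟨Set.Ioi 0, Ioi_mem_nhds (by norm_num), by
      rintro x ⟨hx1, hx2⟩; exact ⟨hx1, hx2⟩⟩
  filter_upwards [hIoo] with r hr
  have hmem : ((r : ℂ) * z₀) ∈ unitDisk := by
    simp only [unitDisk, Set.mem_setOf_eq, Complex.norm_eq_abs, map_mul, Complex.abs_ofReal, hz₀a, mul_one]
    rw [abs_of_pos hr.1]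
    exact hr.2
  exact le_ciSup hbdd ⟨(r : ℂ) * z₀, hmem⟩

lemma key_identity (ξ s t : ℝ) (u h z : ℂ) (ht : t ≠ 0)
    (hD : 1 - (starRingEnd ℂ) u * z ≠ 0)
    (hDt : 1 - (starRingEnd ℂ) (u + h * t) * z ≠ 0) :
    autMap (ξ + s * t) (u + h * t) z - autMap ξ u z - (t : ℂ) * W ξ u s h z
      = Complex.exp (Complex.I * ξ) * (t : ℂ) ^ 2 *
        ((((Complex.exp (Complex.I * ((s : ℂ) * (t : ℂ))) - 1 - Complex.I * ((s : ℂ) * (t : ℂ)))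
              / (t : ℂ) ^ 2) * (z - u) - Complex.I * s * h
            - (t : ℂ) * h * ((Complex.exp (Complex.I * ((s : ℂ) * (t : ℂ))) - 1
              - Complex.I * ((s : ℂ) * (t : ℂ))) / (t : ℂ) ^ 2))
            * (1 - (starRingEnd ℂ) u * z) ^ 2
          + Complex.I * s * (z - u) * ((starRingEnd ℂ) h) * z * (1 - (starRingEnd ℂ) u * z)
          - h * ((starRingEnd ℂ) h) * z * (1 - (starRingEnd ℂ) u * z)
          + ((starRingEnd ℂ) h) ^ 2 * z ^ 2 * (z - u))
        / ((1 - (starRingEnd ℂ) (u + h * t) * z) * (1 - (starRingEnd ℂ) u * z) ^ 2) := by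
  have htc : (t : ℂ) ≠ 0 := by exact_mod_cast ht
  have hsplit : Complex.exp (Complex.I * ((ξ + s * t : ℝ) : ℂ))
      = Complex.exp (Complex.I * ξ) * Complex.exp (Complex.I * ((s : ℂ) * (t : ℂ))) := by
    rw [← Complex.exp_add]
    congr 1
    push_cast
    ring
  have hconj : (starRingEnd ℂ) (u + h * t) = (starRingEnd ℂ) u + (starRingEnd ℂ) h * t := by
    rw [map_add, map_mul, Complex.conj_ofReal]
  unfold autMap W
  rw [hconj] at hDt
  rw [hsplit, hconj]
  set X : ℂ := Complex.exp (Complex.I * ((s : ℂ) * (t : ℂ))) with hX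
  set Y : ℂ := Complex.exp (Complex.I * (ξ : ℂ)) with hY
  set cu : ℂ := (starRingEnd ℂ) u with hcu
  set ch : ℂ := (starRingEnd ℂ) h with hch
  have hD' : 1 - z * cu ≠ 0 := by rwa [mul_comm]
  have hDt' : 1 - z * (cu + (t:ℂ) * ch) ≠ 0 := by rwa [mul_comm, mul_comm (t:ℂ)]
  set_option maxHeartbeats 2000000 in
  field_simp
  set_option maxHeartbeats 2000000 in
  ring

end FinslerAux

theorem finsler_limit (u : ℂ) (hu : u ∈ unitDisk) (s : ℝ) (h : ℂ)
    (hne : (s, h) ≠ (0, 0)) (ξ : ℝ) :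
    Filter.Tendsto
      (fun t : ℝ => dHinf (autMap ξ u) (autMap (ξ + s * t) (u + h * t)) / t)
      (nhdsWithin 0 (Set.Ioi 0))
      (nhds ((2 * ‖h‖
          + |2 * ((starRingEnd ℂ) u * h).im - s * (1 - ‖u‖ ^ 2)|)
        / (1 - ‖u‖ ^ 2))) := by
  classical
  have hu1 : Complex.abs u < 1 := hu
  have hu0 : 0 ≤ Complex.abs u := Complex.abs.nonneg u
  have ha1 : (0:ℝ) < 1 - Complex.abs u := by linarith
  set a := Complex.abs u with haa
  set ah := Complex.abs h with hah
  have hah0 : (0:ℝ) ≤ ah := Complex.abs.nonneg h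
  set Cb : ℝ := (2*s^2 + |s| * ah + ah*s^2)*4 + 4 * |s| * ah + 4*ah^2 with hCb
  have hCb0 : 0 ≤ Cb := by positivity
  set m : ℝ := ((1-a)/2) * (1-a)^2 with hm
  have hm0 : 0 < m := by positivity
  set C2 : ℝ := Cb / m with hC2
  have hC20 : 0 ≤ C2 := by positivity
  set δ : ℝ := min (1/(|s|+1)) (min 1 ((1-a)/(2*(ah+1)))) with hδdef
  have hδ0 : 0 < δ := by
    refine lt_min (by positivity) (lt_min (by norm_num) (by positivity))
  -- the key second-order estimate
  have hmain : ∀ t : ℝ, 0 < t → t ≤ δ → ∀ z : ℂ, Complex.abs z < 1 →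
      Complex.abs (autMap (ξ + s*t) (u + h*t) z - autMap ξ u z
          - (t:ℂ) * FinslerAux.W ξ u s h z) ≤ C2 * t^2 := by
    intro t ht htδ z hzlt
    have hz1 : Complex.abs z ≤ 1 := le_of_lt hzlt
    have htne : t ≠ 0 := ne_of_gt ht
    have ht1 : t ≤ 1 := le_trans htδ (le_trans (min_le_right _ _) (min_le_left _ _))
    have hts : |s| * t ≤ 1 := by
      have h1 : t ≤ 1/(|s|+1) := le_trans htδ (min_le_left _ _)
      have h2 : (0:ℝ) ≤ |s| := abs_nonneg s
      rw [le_div_iff₀ (by positivity)] at h1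
      nlinarith
    have hth : ah * t ≤ (1-a)/2 := by
      have h1 : t ≤ (1-a)/(2*(ah+1)) :=
        le_trans htδ (le_trans (min_le_right _ _) (min_le_right _ _))
      rw [le_div_iff₀ (by positivity)] at h1
      nlinarith
    have hDlb : 1 - a ≤ Complex.abs (1 - (starRingEnd ℂ) u * z) := FinslerAux.den_lb u z hz1
    have hDne : 1 - (starRingEnd ℂ) u * z ≠ 0 := FinslerAux.den_ne u z hu1 hz1
    have hconj : (starRingEnd ℂ) (u + h * t) = (starRingEnd ℂ) u + (starRingEnd ℂ) h * t := by
      rw [map_add, map_mul, Complex.conj_ofReal]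
    have hDtlb : (1-a)/2 ≤ Complex.abs (1 - (starRingEnd ℂ) (u + h*t) * z) := by
      have hDt2 : 1 - (starRingEnd ℂ) (u + h*t) * z
          = (1 - (starRingEnd ℂ) u * z) - (t:ℂ) * (starRingEnd ℂ) h * z := by
        rw [hconj]; ring
      have h1 : Complex.abs ((t:ℂ) * (starRingEnd ℂ) h * z) ≤ ah * t := by
        rw [map_mul, map_mul, Complex.abs_ofReal, Complex.abs_conj, abs_of_pos ht]
        calc t * ah * Complex.abs z ≤ t * ah * 1 := by gcongr
          _ = ah * t := by ring
      have h3 := FinslerAux.tri' (1 - (starRingEnd ℂ) u * z) ((t:ℂ) * (starRingEnd ℂ) h * z)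
      rw [← hDt2] at h3
      linarith
    have hDtne : 1 - (starRingEnd ℂ) (u + h*t) * z ≠ 0 := by
      intro hc
      rw [hc] at hDtlb
      simp at hDtlb
      linarith
    set E : ℂ := (Complex.exp (Complex.I*((s:ℂ)*(t:ℂ))) - 1 - Complex.I*((s:ℂ)*(t:ℂ)))/(t:ℂ)^2
      with hE
    have hEb : Complex.abs E ≤ s^2 := by
      rw [hE, map_div₀, map_pow, Complex.abs_ofReal, _root_.abs_of_pos ht]
      rw [div_le_iff₀ (by positivity)]
      have h1 : Complex.abs (Complex.I*((s:ℂ)*(t:ℂ))) ≤ 1 := by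
        rw [map_mul, Complex.abs_I, one_mul, map_mul, Complex.abs_ofReal, Complex.abs_ofReal,
          _root_.abs_of_pos ht]
        exact hts
      have h2 := Complex.abs_exp_sub_one_sub_id_le h1
      rw [map_mul, Complex.abs_I, one_mul, map_mul, Complex.abs_ofReal, Complex.abs_ofReal,
        _root_.abs_of_pos ht] at h2
      calc Complex.abs (Complex.exp (Complex.I*((s:ℂ)*(t:ℂ))) - 1 - Complex.I*((s:ℂ)*(t:ℂ)))
          ≤ (|s| * t)^2 := h2
        _ = s^2 * t^2 := by rw [mul_pow, _root_.sq_abs]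
    have hkey := FinslerAux.key_identity ξ s t u h z htne hDne hDtne
    rw [← hE] at hkey
    rw [hkey]
    -- now bound the right-hand side
    have hAb : Complex.abs (z - u) ≤ 2 := by
      have := FinslerAux.tri z u
      rw [haa] at *
      linarith
    have hDb : Complex.abs (1 - (starRingEnd ℂ) u * z) ≤ 2 := by
      have h1 := FinslerAux.tri 1 ((starRingEnd ℂ) u * z)
      have h2 : Complex.abs ((starRingEnd ℂ) u * z) ≤ 1 := by
        rw [map_mul, Complex.abs_conj]
        calc Complex.abs u * Complex.abs z ≤ 1 * 1 := by
              apply mul_le_mul (le_of_lt hu1) hz1 (Complex.abs.nonneg z) zero_le_one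
          _ = 1 := by norm_num
      simp only [map_one] at h1
      linarith
    set A : ℂ := z - u with hA
    set D : ℂ := 1 - (starRingEnd ℂ) u * z with hD
    set ch : ℂ := (starRingEnd ℂ) h with hch
    have hchb : Complex.abs ch = ah := by rw [hch, Complex.abs_conj, hah]
    have hMb : Complex.abs ((E*A - Complex.I*s*h - (t:ℂ)*h*E) * D^2
        + Complex.I*s*A*ch*z*D - h*ch*z*D + ch^2*z^2*A) ≤ Cb := by
      have hT1 : Complex.abs ((E*A - Complex.I*s*h - (t:ℂ)*h*E) * D^2)
          ≤ (2*s^2 + |s| * ah + ah*s^2)*4 := by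
        rw [map_mul, map_pow]
        have hinner : Complex.abs (E*A - Complex.I*s*h - (t:ℂ)*h*E)
            ≤ 2*s^2 + |s| * ah + ah*s^2 := by
          have i1 : Complex.abs (E*A) ≤ s^2 * 2 := by
            rw [map_mul]
            apply mul_le_mul hEb hAb (Complex.abs.nonneg _) (by positivity)
          have i2 : Complex.abs (Complex.I*s*h) = |s| * ah := by
            rw [map_mul, map_mul, Complex.abs_I, one_mul, Complex.abs_ofReal, hah]
          have i3 : Complex.abs ((t:ℂ)*h*E) ≤ ah * s^2 := by
            rw [map_mul, map_mul, Complex.abs_ofReal, _root_.abs_of_pos ht]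
            calc t * Complex.abs h * Complex.abs E ≤ 1 * ah * s^2 := by
                  apply mul_le_mul _ hEb (Complex.abs.nonneg _) (by positivity)
                  rw [hah]
                  apply mul_le_mul ht1 (le_refl _) hah0 zero_le_one
              _ = ah * s^2 := by ring
          have i4 := FinslerAux.tri (E*A - Complex.I*s*h) ((t:ℂ)*h*E)
          have i5 := FinslerAux.tri (E*A) (Complex.I*s*h)
          rw [i2] at i5
          linarith
        calc Complex.abs (E*A - Complex.I*s*h - (t:ℂ)*h*E) * Complex.abs D ^ 2
            ≤ (2*s^2 + |s| * ah + ah*s^2) * 2^2 := by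
              apply mul_le_mul hinner _ (by positivity) (by positivity)
              exact pow_le_pow_left₀ (Complex.abs.nonneg D) hDb 2
          _ = (2*s^2 + |s| * ah + ah*s^2)*4 := by norm_num
      have hT2 : Complex.abs (Complex.I*s*A*ch*z*D) ≤ 4 * |s| * ah := by
        rw [map_mul, map_mul, map_mul, map_mul, map_mul, Complex.abs_I, one_mul,
          Complex.abs_ofReal, hchb]
        calc |s| * Complex.abs A * ah * Complex.abs z * Complex.abs D
            ≤ |s| * 2 * ah * 1 * 2 := by gcongr <;> first | exact hAb | exact hz1 | exact hDb
          _ = 4 * |s| * ah := by ring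
      have hT3 : Complex.abs (h*ch*z*D) ≤ 2*ah^2 := by
        rw [map_mul, map_mul, map_mul, hchb, ← hah]
        calc ah * ah * Complex.abs z * Complex.abs D ≤ ah * ah * 1 * 2 := by
              gcongr
          _ = 2*ah^2 := by ring
      have hT4 : Complex.abs (ch^2*z^2*A) ≤ 2*ah^2 := by
        rw [map_mul, map_mul, map_pow, map_pow, hchb]
        calc ah^2 * Complex.abs z^2 * Complex.abs A ≤ ah^2 * 1^2 * 2 := by
              gcongr
          _ = 2*ah^2 := by ring
      have j1 := FinslerAux.tri ((E*A - Complex.I*s*h - (t:ℂ)*h*E) * D^2 + Complex.I*s*A*ch*z*D)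
        (h*ch*z*D)
      have j2 := Complex.abs.add_le ((E*A - Complex.I*s*h - (t:ℂ)*h*E) * D^2)
        (Complex.I*s*A*ch*z*D)
      have j3 := Complex.abs.add_le ((E*A - Complex.I*s*h - (t:ℂ)*h*E) * D^2
        + Complex.I*s*A*ch*z*D - h*ch*z*D) (ch^2*z^2*A)
      rw [hCb]
      linarith
    -- final computation of the absolute value
    rw [map_div₀, map_mul, map_mul]
    have hexp1 : Complex.abs (Complex.exp (Complex.I * ξ)) = 1 := by
      rw [Complex.abs_exp]; simp
    rw [hexp1, one_mul, map_pow, Complex.abs_ofReal, _root_.abs_of_pos ht, map_mul, map_pow]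
    have hdenlb : m ≤ Complex.abs (1 - (starRingEnd ℂ) (u + h*t) * z)
        * Complex.abs D ^ 2 := by
      rw [hm]
      apply mul_le_mul hDtlb _ (by positivity) (Complex.abs.nonneg _)
      exact pow_le_pow_left₀ (by linarith) hDlb 2
    refine le_trans (div_le_div₀ (mul_nonneg (sq_nonneg t) hCb0) ?_ hm0 hdenlb)
      (le_of_eq (by rw [hC2]; ring))
    exact mul_le_mul (le_refl _) hMb (Complex.abs.nonneg _) (sq_nonneg t)
  -- assemble the limit
  have hS := FinslerAux.sup_eq ξ u s h hu1
  have hFv : FinslerAux.Fv u s h = (2 * ‖h‖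
      + |2 * ((starRingEnd ℂ) u * h).im - s * (1 - ‖u‖ ^ 2)|)
      / (1 - ‖u‖ ^ 2) := rfl
  rw [← hFv]
  rw [Metric.tendsto_nhdsWithin_nhds]
  intro ε hε
  refine ⟨min δ (ε/(C2+1)), by positivity, ?_⟩
  intro t htmem hdist
  have ht0 : 0 < t := htmem
  rw [Real.dist_eq, sub_zero, _root_.abs_of_pos ht0] at hdist
  have htδ : t ≤ δ := le_of_lt (lt_of_lt_of_le hdist (min_le_left _ _))
  have htε : t < ε/(C2+1) := lt_of_lt_of_le hdist (min_le_right _ _)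
  -- pointwise bounds
  have hWle : ∀ z : unitDisk, Complex.abs (FinslerAux.W ξ u s h z) ≤ FinslerAux.Fv u s h :=
    fun z => FinslerAux.interior_le ξ u s h z hu1 (le_of_lt z.2)
  have hub : ∀ z : unitDisk, Complex.abs (autMap ξ u z - autMap (ξ + s*t) (u + h*t) z)
      ≤ t * FinslerAux.Fv u s h + C2 * t^2 := by
    intro z
    have h1 := hmain t ht0 htδ z z.2
    have h2 : Complex.abs ((t:ℂ) * FinslerAux.W ξ u s h z) ≤ t * FinslerAux.Fv u s h := by
      rw [map_mul, Complex.abs_ofReal, _root_.abs_of_pos ht0]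
      exact mul_le_mul (le_refl t) (hWle z) (Complex.abs.nonneg _) (le_of_lt ht0)
    have h3 : autMap ξ u z - autMap (ξ + s*t) (u + h*t) z
        = -(autMap (ξ + s*t) (u + h*t) z - autMap ξ u z - (t:ℂ) * FinslerAux.W ξ u s h z)
          - (t:ℂ) * FinslerAux.W ξ u s h z := by ring
    rw [h3]
    have h4 := FinslerAux.tri
      (-(autMap (ξ + s*t) (u + h*t) z - autMap ξ u z - (t:ℂ) * FinslerAux.W ξ u s h z))
      ((t:ℂ) * FinslerAux.W ξ u s h z)
    rw [map_neg_eq_map] at h4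
    linarith
  have hbdd : BddAbove (Set.range fun z : unitDisk =>
      Complex.abs (autMap ξ u z - autMap (ξ + s*t) (u + h*t) z)) :=
    ⟨t * FinslerAux.Fv u s h + C2 * t^2, by rintro x ⟨z, rfl⟩; exact hub z⟩
  set dval : ℝ := dHinf (autMap ξ u) (autMap (ξ + s*t) (u + h*t)) with hdval
  have hd_ub : dval ≤ t * FinslerAux.Fv u s h + C2 * t^2 := ciSup_le hub
  have hd_lb : t * FinslerAux.Fv u s h ≤ dval + C2 * t^2 := by
    have hle : ∀ z : unitDisk, Complex.abs (FinslerAux.W ξ u s h z)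
        ≤ (dval + C2 * t^2)/t := by
      intro z
      rw [le_div_iff₀ ht0]
      have h1 := hmain t ht0 htδ z z.2
      have h3 : (t:ℂ) * FinslerAux.W ξ u s h z
          = -(autMap (ξ + s*t) (u + h*t) z - autMap ξ u z - (t:ℂ) * FinslerAux.W ξ u s h z)
            - (autMap ξ u z - autMap (ξ + s*t) (u + h*t) z) := by ring
      have h4 := FinslerAux.tri
        (-(autMap (ξ + s*t) (u + h*t) z - autMap ξ u z - (t:ℂ) * FinslerAux.W ξ u s h z))
        (autMap ξ u z - autMap (ξ + s*t) (u + h*t) z)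
      rw [← h3, map_neg_eq_map] at h4
      have h5 : Complex.abs (autMap ξ u z - autMap (ξ + s*t) (u + h*t) z) ≤ dval :=
        le_ciSup hbdd z
      have h6 : Complex.abs ((t:ℂ) * FinslerAux.W ξ u s h z)
          = Complex.abs (FinslerAux.W ξ u s h z) * t := by
        rw [map_mul, Complex.abs_ofReal, _root_.abs_of_pos ht0]; ring
      rw [h6] at h4
      linarith
    have h7 : FinslerAux.Fv u s h ≤ (dval + C2 * t^2)/t := by
      rw [← hS]
      exact ciSup_le hle
    rw [le_div_iff₀ ht0] at h7
    linarith [h7]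
  rw [Real.dist_eq]
  have habs : |dval / t - FinslerAux.Fv u s h| ≤ C2 * t := by
    rw [abs_le]
    constructor
    · rw [div_sub' (ne_of_gt ht0), le_div_iff₀ ht0]
      nlinarith
    · rw [div_sub' (ne_of_gt ht0), div_le_iff₀ ht0]
      nlinarith
  have hfin : C2 * t < ε := by
    have h8 : C2 * t ≤ C2 * (ε/(C2+1)) := by
      apply mul_le_mul (le_refl _) (le_of_lt htε) (le_of_lt ht0) hC20
    have h9 : C2 * (ε/(C2+1)) < ε := by
      rw [mul_div_assoc']
      rw [div_lt_iff₀ (by positivity)]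
      nlinarith
    linarith
  exact lt_of_le_of_lt habs hfin
end
end
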